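/- arXiv:1605.05599 — 13 statements merged into one kernel-verified Lean document; each statement's English description precedes it below -/
import Mathlib

section
/- Let G1 and G2 be simple graphs on the same finite vertex set, let ℓ ≥ 1, and let u_0, …, u_{ℓ−1} be distinct vertices. Suppose that for every k, k' ∈ {0, …, ℓ−1}: there is no red–blue-link from u_k to u_{(k+1 mod ℓ)}, and if u_k u_{k'} ∈ E(G2) then u_{(k+1 mod ℓ)} u_{(k'+1 mod ℓ)} ∉ E(G1). Let τ be the permutation of the vertex set that maps u_k to u_{(k+1 mod ℓ)} for each k and fixes all other vertices, and let G2' be the image of G2 under τ (i.e., x'y' ∈ E(G2') iff τ⁻¹(x')τ⁻¹(y') ∈ E(G2)). Then no edge belonging to both G1 and G2' is incident to any of u_0, …, u_{ℓ−1}. -/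
open SimpleGraph

theorem stmt_5 {V : Type*} [Fintype V] [DecidableEq V]
    (G1 G2 : SimpleGraph V)
    (ℓ : ℕ) [NeZero ℓ] (u : Fin ℓ → V) (hu : Function.Injective u)
    (hnolink : ∀ k : Fin ℓ, ¬ ∃ i' : V, G2.Adj (u k) i' ∧ G1.Adj i' (u (k + 1)))
    (hswap : ∀ k k' : Fin ℓ, G2.Adj (u k) (u k') → ¬ G1.Adj (u (k + 1)) (u (k' + 1)))
    (τ : Equiv.Perm V)
    (hτ : ∀ k : Fin ℓ, τ (u k) = u (k + 1))
    (hτfix : ∀ x : V, (∀ k : Fin ℓ, x ≠ u k) → τ x = x)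
    (G2' : SimpleGraph V)
    (hG2' : ∀ x y : V, G2'.Adj x y ↔ G2.Adj (τ.symm x) (τ.symm y)) :
    ∀ (k : Fin ℓ) (x : V), ¬ (G1.Adj (u k) x ∧ G2'.Adj (u k) x) := by
  have hsymm : ∀ k : Fin ℓ, τ.symm (u k) = u (k - 1) := by
    intro k
    have := hτ (k - 1)
    rw [sub_add_cancel] at this
    rw [← this, Equiv.symm_apply_apply]
  rintro k x ⟨h1, h2⟩
  rw [hG2' ] at h2
  rw [hsymm k] at h2
  by_cases hx : ∃ k' : Fin ℓ, x = u k'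
  · obtain ⟨k', rfl⟩ := hx
    rw [hsymm k'] at h2
    have := hswap (k - 1) (k' - 1) h2
    rw [sub_add_cancel, sub_add_cancel] at this
    exact this h1
  · push_neg at hx
    have hfix : τ.symm x = x := by
      have := hτfix x hx
      rw [← this, Equiv.symm_apply_apply, this]
    rw [hfix] at h2
    exact hnolink (k - 1) ⟨x, h2, by rw [sub_add_cancel]; exact h1.symm⟩
end

section
/- (Corrádi's lemma) Let N ≥ 1, k ≥ 1 and t ≥ 1 be integers, let A_1, …, A_N be finite sets each of cardinality exactly k, and let X = A_1 ∪ ⋯ ∪ A_N. If |A_i ∩ A_j| ≤ t − 1 for all i ≠ j, then |X| ≥ k²·N / (k + (N−1)·(t−1)). -/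
theorem stmt_6 {α : Type*} [DecidableEq α] (N k t : ℕ)
    (hN : 1 ≤ N) (hk : 1 ≤ k) (ht : 1 ≤ t)
    (A : Fin N → Finset α) (hcard : ∀ i, (A i).card = k)
    (X : Finset α) (hX : X = Finset.univ.biUnion A)
    (hinter : ∀ i j : Fin N, i ≠ j → (A i ∩ A j).card ≤ t - 1) :
    (X.card : ℝ) ≥ (k : ℝ) ^ 2 * (N : ℝ) / ((k : ℝ) + ((N : ℝ) - 1) * ((t : ℝ) - 1)) := by
  classical
  set d : α → ℕ := fun x => (Finset.univ.filter (fun i => x ∈ A i)).card with hd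
  have hsub : ∀ i, A i ⊆ X := fun i => hX ▸ Finset.subset_biUnion_of_mem A (Finset.mem_univ i)
  have hfilt : ∀ i, X.filter (· ∈ A i) = A i := fun i => by
    rw [Finset.filter_mem_eq_inter, Finset.inter_eq_right.mpr (hsub i)]
  have hdite : ∀ x, d x = ∑ i : Fin N, if x ∈ A i then 1 else 0 := fun x =>
    Finset.card_filter _ _
  -- Lemma 1
  have h1 : ∑ x ∈ X, d x = N * k := by
    simp_rw [hdite]
    rw [Finset.sum_comm]
    have : ∀ i : Fin N, (∑ x ∈ X, if x ∈ A i then 1 else 0) = k := fun i => by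
      rw [← Finset.card_filter, hfilt, hcard]
    simp [this]
  -- Lemma 2
  have h2 : ∑ x ∈ X, (d x)^2 = ∑ i : Fin N, ∑ j : Fin N, (A i ∩ A j).card := by
    have hx : ∀ x, (d x)^2 = ∑ i : Fin N, ∑ j : Fin N, if x ∈ A i ∩ A j then 1 else 0 := by
      intro x
      rw [sq, hdite, Finset.sum_mul_sum]
      congr 1; ext i; congr 1; ext j
      by_cases hi : x ∈ A i <;> by_cases hj : x ∈ A j <;> simp [hi, hj, Finset.mem_inter]
    simp_rw [hx]
    rw [Finset.sum_comm]
    congr 1; ext i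
    rw [Finset.sum_comm]
    congr 1; ext j
    rw [← Finset.card_filter, Finset.filter_mem_eq_inter,
      Finset.inter_eq_right.mpr ((Finset.inter_subset_left).trans (hsub i))]
  -- bound on sum of squares
  have h3 : ∑ x ∈ X, (d x)^2 ≤ N * k + N * (N-1) * (t-1) := by
    rw [h2]
    calc ∑ i : Fin N, ∑ j : Fin N, (A i ∩ A j).card
        ≤ ∑ i : Fin N, (k + (N-1)*(t-1)) := by
          apply Finset.sum_le_sum
          intro i _
          rw [← Finset.sum_erase_add _ _ (Finset.mem_univ i), Finset.inter_self, hcard]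
          have : ∑ j ∈ Finset.univ.erase i, (A i ∩ A j).card ≤ (N-1)*(t-1) := by
            calc ∑ j ∈ Finset.univ.erase i, (A i ∩ A j).card
                ≤ ∑ j ∈ Finset.univ.erase i, (t-1) :=
                  Finset.sum_le_sum fun j hj => hinter i j (Finset.ne_of_mem_erase hj).symm
              _ = (N-1)*(t-1) := by
                  rw [Finset.sum_const, Finset.card_erase_of_mem (Finset.mem_univ i)]
                  simp [mul_comm]
          omega
      _ = N * (k + (N-1)*(t-1)) := by simp [mul_comm]
      _ = N * k + N * (N-1) * (t-1) := by ring
  -- Cauchy-Schwarz over ℝ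
  have hcs : ((N*k : ℕ) : ℝ)^2 ≤ (X.card : ℝ) * ((N*k + N*(N-1)*(t-1) : ℕ) : ℝ) := by
    have := sq_sum_le_card_mul_sum_sq (s := X) (f := fun x => (d x : ℝ))
    calc ((N*k : ℕ) : ℝ)^2 = (∑ x ∈ X, (d x : ℝ))^2 := by rw [← h1]; push_cast; ring
      _ ≤ (X.card : ℝ) * ∑ x ∈ X, (d x : ℝ)^2 := this
      _ ≤ (X.card : ℝ) * ((N*k + N*(N-1)*(t-1) : ℕ) : ℝ) := by
          gcongr
          have := h3
          push_cast
          calc ∑ x ∈ X, (d x : ℝ)^2 = ((∑ x ∈ X, (d x)^2 : ℕ) : ℝ) := by push_cast; ring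
            _ ≤ _ := by exact_mod_cast Nat.cast_le.mpr h3
  -- finish
  have hNr : (1:ℝ) ≤ (N:ℝ) := by exact_mod_cast hN
  have hD : (0:ℝ) < (k : ℝ) + ((N : ℝ) - 1) * ((t : ℝ) - 1) := by
    have : (1:ℝ) ≤ (k:ℝ) := by exact_mod_cast hk
    have h1' : (1:ℝ) ≤ (t:ℝ) := by exact_mod_cast ht
    nlinarith
  rw [ge_iff_le, div_le_iff₀ hD]
  have hcast : ((N*(N-1)*(t-1) : ℕ) : ℝ) = (N:ℝ)*((N:ℝ)-1)*((t:ℝ)-1) := by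
    have : ((N-1 : ℕ):ℝ) = (N:ℝ)-1 := by
      have := hN; push_cast [Nat.cast_sub hN]; ring
    have h2' : ((t-1 : ℕ):ℝ) = (t:ℝ)-1 := by push_cast [Nat.cast_sub ht]; ring
    push_cast [Nat.cast_sub hN, Nat.cast_sub ht]; ring
  have hcs' : ((N:ℝ)*k)^2 ≤ (X.card : ℝ) * ((N:ℝ)*k + (N:ℝ)*((N:ℝ)-1)*((t:ℝ)-1)) := by
    have := hcs
    push_cast [Nat.cast_sub hN, Nat.cast_sub ht] at this
    convert this using 2 <;> ring
  have hNpos : (0:ℝ) < N := by linarith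
  have hXnn : (0:ℝ) ≤ (X.card : ℝ) := Nat.cast_nonneg _
  nlinarith [hcs', mul_pos hNpos hD]
end

section
/- Let N ≥ 1, k ≥ 1 and t ≥ 1 be integers, let X be a finite set, and let A_1, …, A_N be subsets of X each of cardinality at least k. If k² > (t−1)·|X| and |A_i ∩ A_j| ≤ t − 1 for all i ≠ j, then N ≤ |X| · (k − (t−1)) / (k² − (t−1)·|X|). -/
theorem stmt_7 {α : Type*} [DecidableEq α] (N k t : ℕ)
    (hN : 1 ≤ N) (hk : 1 ≤ k) (ht : 1 ≤ t)
    (X : Finset α) (A : Fin N → Finset α)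
    (hsub : ∀ i, A i ⊆ X) (hcard : ∀ i, k ≤ (A i).card)
    (hbig : (k : ℝ) ^ 2 > ((t : ℝ) - 1) * (X.card : ℝ))
    (hinter : ∀ i j : Fin N, i ≠ j → (A i ∩ A j).card ≤ t - 1) :
    (N : ℝ) ≤ (X.card : ℝ) * ((k : ℝ) - ((t : ℝ) - 1))
      / ((k : ℝ) ^ 2 - ((t : ℝ) - 1) * (X.card : ℝ)) := by
  set n : ℕ := X.card with hn
  set S : ℕ := ∑ i, (A i).card with hS
  set d : α → ℕ := fun x => (Finset.univ.filter (fun i => x ∈ A i)).card with hd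
  -- each A i equals X.filter (· ∈ A i)
  have hfilt : ∀ i, X.filter (fun x => x ∈ A i) = A i := by
    intro i
    rw [Finset.filter_mem_eq_inter, Finset.inter_eq_right]
    exact hsub i
  have hdx : ∀ x, d x = ∑ i, if x ∈ A i then 1 else 0 := by
    intro x; simp only [hd, Finset.card_filter]
  -- Lemma 1: ∑_{x∈X} d x = S
  have hsum1 : ∑ x ∈ X, d x = S := by
    rw [hS]
    simp only [hdx]
    rw [Finset.sum_comm]
    congr 1; funext i
    rw [← Finset.card_filter, hfilt]
  -- Lemma 2: ∑_{x∈X} (d x)^2 = ∑ i, ∑ j, |A i ∩ A j|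
  have hsum2 : ∑ x ∈ X, (d x) ^ 2 = ∑ i, ∑ j, (A i ∩ A j).card := by
    have : ∀ x, (d x) ^ 2 = ∑ i, ∑ j, (if x ∈ A i ∩ A j then 1 else 0) := by
      intro x
      rw [sq, hdx, Finset.sum_mul_sum]
      congr 1; funext i; congr 1; funext j
      by_cases h1 : x ∈ A i <;> by_cases h2 : x ∈ A j <;>
        simp [h1, h2, Finset.mem_inter]
    simp only [this]
    rw [Finset.sum_comm]
    congr 1; funext i
    rw [Finset.sum_comm]
    congr 1; funext j
    rw [← Finset.card_filter, Finset.filter_mem_eq_inter,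
      Finset.inter_eq_right.mpr ((Finset.inter_subset_left).trans (hsub i))]
  -- Lemma 3: bound the double sum
  have hsum3 : ∑ i, ∑ j, (A i ∩ A j).card ≤ S + N * (N - 1) * (t - 1) := by
    have hrow : ∀ i : Fin N, ∑ j, (A i ∩ A j).card ≤ (A i).card + (N - 1) * (t - 1) := by
      intro i
      rw [← Finset.sum_erase_add _ _ (Finset.mem_univ i), Finset.inter_self]
      have : ∑ j ∈ Finset.univ.erase i, (A i ∩ A j).card ≤ (N - 1) * (t - 1) := by
        calc ∑ j ∈ Finset.univ.erase i, (A i ∩ A j).card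
            ≤ ∑ j ∈ Finset.univ.erase i, (t - 1) := by
              apply Finset.sum_le_sum
              intro j hj
              exact hinter i j (fun h => (Finset.mem_erase.mp hj).1 h.symm)
          _ = (N - 1) * (t - 1) := by
              rw [Finset.sum_const, Finset.card_erase_of_mem (Finset.mem_univ i)]
              simp [mul_comm]
      omega
    calc ∑ i, ∑ j, (A i ∩ A j).card ≤ ∑ i : Fin N, ((A i).card + (N - 1) * (t - 1)) :=
          Finset.sum_le_sum (fun i _ => hrow i)
      _ = S + N * ((N - 1) * (t - 1)) := by
          rw [Finset.sum_add_distrib, Finset.sum_const]; simp [hS]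
      _ = S + N * (N - 1) * (t - 1) := by ring_nf
  -- Cauchy-Schwarz
  have hCS : (S : ℝ) ^ 2 ≤ (n : ℝ) * ((S : ℝ) + (N : ℝ) * ((N : ℝ) - 1) * ((t : ℝ) - 1)) := by
    have h1 : ((∑ x ∈ X, d x : ℕ) : ℝ) ^ 2 ≤ (n : ℝ) * ((∑ x ∈ X, (d x)^2 : ℕ) : ℝ) := by
      push_cast
      exact sq_sum_le_card_mul_sum_sq
    rw [hsum1, hsum2] at h1
    refine h1.trans ?_
    apply mul_le_mul_of_nonneg_left _ (Nat.cast_nonneg n)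
    have h2 : ((∑ i, ∑ j, (A i ∩ A j).card : ℕ) : ℝ)
        ≤ ((S + N * (N - 1) * (t - 1) : ℕ) : ℝ) := by exact_mod_cast hsum3
    refine h2.trans ?_
    push_cast [Nat.cast_sub hN, Nat.cast_sub ht]
    ring_nf
    exact le_refl _
  have hSk : (N : ℝ) * (k : ℝ) ≤ (S : ℝ) := by
    have : N * k ≤ S := by
      rw [hS]
      calc N * k = ∑ _i : Fin N, k := by simp [mul_comm]
        _ ≤ ∑ i, (A i).card := Finset.sum_le_sum (fun i _ => hcard i)
    exact_mod_cast this
  -- key inequality: k*(N*k - n) ≤ (N-1)*n*(t-1)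
  have hN1 : (1:ℝ) ≤ N := by exact_mod_cast hN
  have ht1 : (1:ℝ) ≤ t := by exact_mod_cast ht
  have hkey : (k : ℝ) * ((N : ℝ) * k - n) ≤ ((N : ℝ) - 1) * n * ((t : ℝ) - 1) := by
    rcases le_or_gt ((N : ℝ) * k) (n : ℝ) with h | h
    · have h1 : (k : ℝ) * ((N : ℝ) * k - n) ≤ 0 := by
        apply mul_nonpos_of_nonneg_of_nonpos (Nat.cast_nonneg k); linarith
      have h2 : (0 : ℝ) ≤ ((N : ℝ) - 1) * n * ((t : ℝ) - 1) := by
        apply mul_nonneg (mul_nonneg (by linarith) (Nat.cast_nonneg n)) (by linarith)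
      linarith
    · -- N*k > n: from S(S-n) ≤ n*N*(N-1)*(t-1) and S ≥ N*k ≥ n
      have hNpos : (0:ℝ) < N := by linarith
      have hSn : (S:ℝ) * ((S:ℝ) - n) ≤ (n:ℝ) * ((N:ℝ) * ((N:ℝ) - 1) * ((t:ℝ) - 1)) := by
        nlinarith [hCS]
      have hmono : (N:ℝ) * k * ((N:ℝ) * k - n) ≤ (S:ℝ) * ((S:ℝ) - n) := by
        have h0 : (0:ℝ) ≤ (N:ℝ) * k := by positivity
        nlinarith
      have : (N:ℝ) * ((k:ℝ) * ((N:ℝ)*k - n)) ≤ (N:ℝ) * (((N:ℝ) - 1) * n * ((t:ℝ) - 1)) := by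
        nlinarith
      exact le_of_mul_le_mul_left (by linarith) hNpos
  -- conclude
  have hpos : (0:ℝ) < (k:ℝ)^2 - ((t:ℝ)-1) * n := by linarith
  rw [le_div_iff₀ hpos]
  nlinarith [hkey]
end

section
/- Let G1 and G2 be simple graphs on the same finite vertex set of size n that do not pack, and suppose that the edge {u,v} is the unique edge belonging to both G1 and G2 (i.e., E(G1) ∩ E(G2) = {{u,v}}). Then for every vertex w ≠ v, there is a red–blue-link or a blue–red-link from u to w. -/
open SimpleGraph

theorem stmt_8 {V : Type*} [Fintype V] [DecidableEq V]
    (G1 G2 : SimpleGraph V) (n : ℕ) (hn : Fintype.card V = n)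
    (hnopack : ¬ ∃ σ : Equiv.Perm V, ∀ x y : V, G2.Adj x y → ¬ G1.Adj (σ x) (σ y))
    (u v : V) (huv : G1.edgeSet ∩ G2.edgeSet = {s(u, v)}) :
    ∀ w : V, w ≠ v →
      (∃ i' : V, G2.Adj u i' ∧ G1.Adj i' w) ∨ (∃ i' : V, G1.Adj u i' ∧ G2.Adj i' w) := by
  intro w hw
  by_contra hcon
  push_neg at hcon
  obtain ⟨h1, h2⟩ := hcon
  have key : ∀ a b : V, G1.Adj a b → G2.Adj a b →
      (a = u ∧ b = v) ∨ (a = v ∧ b = u) := by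
    intro a b ha hb
    have hmem : s(a, b) ∈ G1.edgeSet ∩ G2.edgeSet := ⟨ha, hb⟩
    rw [huv] at hmem
    have : s(a, b) = s(u, v) := hmem
    rwa [Sym2.eq_iff] at this
  have huvne : u ≠ v := by
    have hmem : s(u, v) ∈ G1.edgeSet ∩ G2.edgeSet := by rw [huv]; rfl
    exact hmem.1.ne
  apply hnopack
  refine ⟨Equiv.swap u w, ?_⟩
  intro x y hxy hxy1
  by_cases hxu : x = u
  · rw [hxu] at hxy
    rw [hxu, Equiv.swap_apply_left] at hxy1
    by_cases hyw : y = w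
    · rw [hyw] at hxy
      rw [hyw, Equiv.swap_apply_right] at hxy1
      rcases key u w hxy1.symm hxy with ⟨_, h⟩ | ⟨h, _⟩
      · exact hw h
      · exact huvne h
    · by_cases hyu : y = u
      · exact hxy.ne hyu.symm
      · rw [Equiv.swap_apply_of_ne_of_ne hyu hyw] at hxy1
        exact h1 y hxy hxy1.symm
  · by_cases hxw : x = w
    · rw [hxw] at hxy
      rw [hxw, Equiv.swap_apply_right] at hxy1
      by_cases hyu : y = u
      · rw [hyu] at hxy
        rw [hyu, Equiv.swap_apply_left] at hxy1
        rcases key u w hxy1 hxy.symm with ⟨_, h⟩ | ⟨h, _⟩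
        · exact hw h
        · exact huvne h
      · by_cases hyw : y = w
        · exact hxy.ne hyw.symm
        · rw [Equiv.swap_apply_of_ne_of_ne hyu hyw] at hxy1
          exact h2 y hxy1 hxy.symm
    · rw [Equiv.swap_apply_of_ne_of_ne hxu hxw] at hxy1
      by_cases hyu : y = u
      · rw [hyu] at hxy
        rw [hyu, Equiv.swap_apply_left] at hxy1
        exact h1 x hxy.symm hxy1
      · by_cases hyw : y = w
        · rw [hyw] at hxy
          rw [hyw, Equiv.swap_apply_right] at hxy1
          exact h2 x hxy1.symm hxy
        · rw [Equiv.swap_apply_of_ne_of_ne hyu hyw] at hxy1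
          rcases key x y hxy1 hxy with ⟨h, _⟩ | ⟨_, h⟩
          · exact hxu h
          · exact hyu h
end

section
/- Let G1 and G2 be simple graphs on the same finite vertex set of size n that do not pack, and suppose that the edge {u,v} is the unique edge belonging to both G1 and G2 (i.e., E(G1) ∩ E(G2) = {{u,v}}). Then for every a ∈ A*(u) and every b ∈ B(u), there is a red–blue-link from a to b. -/
open SimpleGraph Finset

theorem stmt_9 {V : Type*} [Fintype V] [DecidableEq V]
    (G1 G2 : SimpleGraph V) [DecidableRel G1.Adj] [DecidableRel G2.Adj]
    (n : ℕ) (hn : Fintype.card V = n)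
    (hnopack : ¬ ∃ σ : Equiv.Perm V, ∀ x y : V, G2.Adj x y → ¬ G1.Adj (σ x) (σ y))
    (u v : V) (huv : G1.edgeSet ∩ G2.edgeSet = {s(u, v)})
    (Astar B : Finset V)
    (hAstar : Astar = ((G1.neighborFinset u).biUnion fun x => G2.neighborFinset x)
        \ (G2.neighborFinset u ∪ ((G2.neighborFinset u).biUnion fun x => G1.neighborFinset x)))
    (hB : B = ((G2.neighborFinset u).biUnion fun x => G1.neighborFinset x)
        \ (G1.neighborFinset u ∪ G2.neighborFinset u
          ∪ ((G1.neighborFinset u).biUnion fun x => G2.neighborFinset x))) :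
    ∀ a ∈ Astar, ∀ b ∈ B, ∃ i' : V, G2.Adj a i' ∧ G1.Adj i' b := by
  intro a ha b hb
  by_contra hnl
  push_neg at hnl
  subst hAstar hB
  simp only [mem_sdiff, mem_union, mem_biUnion, mem_neighborFinset, not_or, not_exists,
    not_and] at ha hb
  obtain ⟨⟨w, hw1, hw2⟩, ha2, ha3⟩ := ha
  obtain ⟨-, ⟨⟨hb2, hb3⟩, hb4⟩⟩ := hb
  have hmem : s(u, v) ∈ G1.edgeSet ∩ G2.edgeSet := by rw [huv]; rfl
  have hblue_uv : G1.Adj u v := hmem.1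
  have hred_uv : G2.Adj u v := hmem.2
  have hpur : ∀ x y : V, G2.Adj x y → G1.Adj x y → (x = u ∧ y = v) ∨ (x = v ∧ y = u) := by
    intro x y h2 h1
    have : s(x, y) ∈ ({s(u, v)} : Set (Sym2 V)) := huv ▸ ⟨h1, h2⟩
    have := Set.mem_singleton_iff.mp this
    rwa [Sym2.eq_iff] at this
  have hau : a ≠ u := by
    rintro rfl
    exact ha3 v hred_uv hblue_uv.symm
  have hab : a ≠ b := by
    rintro rfl
    exact hb4 w hw1 hw2
  have hbu : b ≠ u := by
    rintro rfl
    exact hb4 v hblue_uv hred_uv.symm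
  set σ : Equiv.Perm V := (Equiv.swap u a).trans (Equiv.swap u b) with hσ
  have hσu : σ u = a := by
    simp [hσ, Equiv.swap_apply_left, Equiv.swap_apply_of_ne_of_ne hau hab]
  have hσa : σ a = b := by
    simp [hσ, Equiv.swap_apply_of_ne_of_ne]
  have hσb : σ b = u := by
    simp [hσ, Equiv.swap_apply_of_ne_of_ne hbu (Ne.symm hab)]
  have hσo : ∀ z : V, z ≠ u → z ≠ a → z ≠ b → σ z = z := by
    intro z h1 h2 h3
    simp [hσ, Equiv.swap_apply_of_ne_of_ne h1 h2, Equiv.swap_apply_of_ne_of_ne h1 h3]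
  refine hnopack ⟨σ, ?_⟩
  intro x y hxy hblue
  rcases eq_or_ne x u with hx | hxu
  · rw [hx] at hxy hblue
    clear hx
    rcases eq_or_ne y u with rfl | hyu
    · exact G2.irrefl hxy
    rcases eq_or_ne y a with rfl | hya
    · exact ha2 hxy
    rcases eq_or_ne y b with rfl | hyb
    · exact hb3 hxy
    · rw [hσu, hσo y hyu hya hyb] at hblue
      exact ha3 y hxy hblue.symm
  rcases eq_or_ne x a with hx | hxa
  · rw [hx] at hxy hblue
    clear hx
    rcases eq_or_ne y u with rfl | hyu
    · exact ha2 hxy.symm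
    rcases eq_or_ne y a with rfl | hya
    · exact G2.irrefl hxy
    rcases eq_or_ne y b with rfl | hyb
    · rw [hσa, hσb] at hblue
      exact hb2 hblue.symm
    · rw [hσa, hσo y hyu hya hyb] at hblue
      exact hnl y hxy hblue.symm
  rcases eq_or_ne x b with hx | hxb
  · rw [hx] at hxy hblue
    clear hx
    rcases eq_or_ne y u with rfl | hyu
    · exact hb3 hxy.symm
    rcases eq_or_ne y a with rfl | hya
    · rw [hσb, hσa] at hblue
      exact hb2 hblue
    rcases eq_or_ne y b with rfl | hyb
    · exact G2.irrefl hxy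
    · rw [hσb, hσo y hyu hya hyb] at hblue
      exact hb4 y hblue hxy.symm
  · rcases eq_or_ne y u with rfl | hyu
    · rw [hσu, hσo x hxu hxa hxb] at hblue
      exact ha3 x hxy.symm hblue
    rcases eq_or_ne y a with rfl | hya
    · rw [hσa, hσo x hxu hxa hxb] at hblue
      exact hnl x hxy.symm hblue
    rcases eq_or_ne y b with rfl | hyb
    · rw [hσb, hσo x hxu hxa hxb] at hblue
      exact hb4 x hblue.symm hxy
    · rw [hσo x hxu hxa hxb, hσo y hyu hya hyb] at hblue
      rcases hpur x y hxy hblue with ⟨rfl, -⟩ | ⟨-, rfl⟩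
      · exact hxu rfl
      · exact hyu rfl
end

section
/- Let G1 and G2 be simple graphs on the same finite vertex set of size n that do not pack, and suppose that the edge {u,v} is the unique edge belonging to both G1 and G2 (i.e., E(G1) ∩ E(G2) = {{u,v}}). Then n ≤ |N2(u)| + |A*(u)| + |N1(N2(u))|. -/
open SimpleGraph Finset

theorem stmt_10 {V : Type*} [Fintype V] [DecidableEq V]
    (G1 G2 : SimpleGraph V) [DecidableRel G1.Adj] [DecidableRel G2.Adj]
    (n : ℕ) (hn : Fintype.card V = n)
    (hnopack : ¬ ∃ σ : Equiv.Perm V, ∀ x y : V, G2.Adj x y → ¬ G1.Adj (σ x) (σ y))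
    (u v : V) (huv : G1.edgeSet ∩ G2.edgeSet = {s(u, v)})
    (Astar : Finset V)
    (hAstar : Astar = ((G1.neighborFinset u).biUnion fun x => G2.neighborFinset x)
        \ (G2.neighborFinset u ∪ ((G2.neighborFinset u).biUnion fun x => G1.neighborFinset x))) :
    n ≤ (G2.neighborFinset u).card + Astar.card
      + ((G2.neighborFinset u).biUnion fun x => G1.neighborFinset x).card := by
  set N2u := G2.neighborFinset u with hN2u
  set N1N2u := (G2.neighborFinset u).biUnion (fun x => G1.neighborFinset x) with hN1N2u
  have hmem : s(u,v) ∈ G1.edgeSet ∩ G2.edgeSet := by rw [huv]; rfl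
  obtain ⟨h1uv, h2uv⟩ := hmem
  rw [SimpleGraph.mem_edgeSet] at h1uv h2uv
  have hcommon : ∀ x y : V, G2.Adj x y → G1.Adj x y →
      (x = u ∧ y = v) ∨ (x = v ∧ y = u) := by
    intro x y h2 h1
    have hx : s(x,y) ∈ G1.edgeSet ∩ G2.edgeSet := ⟨h1, h2⟩
    rw [huv, Set.mem_singleton_iff, Sym2.eq_iff] at hx
    exact hx
  have key : ∀ w : V, w ∈ N2u ∪ Astar ∪ N1N2u := by
    intro w
    by_contra hw
    simp only [mem_union, not_or] at hw
    obtain ⟨⟨hw2, hwA⟩, hw1⟩ := hw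
    by_cases hwu : w = u
    · subst hwu
      apply hw1
      rw [hN1N2u]
      rw [mem_biUnion]
      exact ⟨v, by simp [h2uv], by simp [h1uv.symm]⟩
    · apply hnopack
      refine ⟨Equiv.swap u w, ?_⟩
      intro x y h2 h1
      by_cases hxu : x = u
      · rw [hxu] at h2 h1
        rw [Equiv.swap_apply_left] at h1
        by_cases hyw : y = w
        · rw [hyw] at h2
          exact hw2 (by simp [hN2u, h2])
        · by_cases hyu : y = u
          · exact h2.ne hyu.symm
          · rw [Equiv.swap_apply_of_ne_of_ne hyu hyw] at h1
            apply hw1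
            rw [hN1N2u, mem_biUnion]
            exact ⟨y, by simp [h2], by simp [h1.symm]⟩
      · by_cases hxw : x = w
        · rw [hxw] at h2 h1
          rw [Equiv.swap_apply_right] at h1
          by_cases hyu : y = u
          · rw [hyu] at h2; exact hw2 (by simp [hN2u, h2.symm])
          · by_cases hyw : y = w
            · exact h2.ne hyw.symm
            · rw [Equiv.swap_apply_of_ne_of_ne hyu hyw] at h1
              apply hwA
              rw [hAstar, mem_sdiff]
              constructor
              · rw [mem_biUnion]
                exact ⟨y, by simp [h1], by simp [h2.symm]⟩
              · rw [mem_union]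
                push_neg
                exact ⟨hw2, hw1⟩
        · rw [Equiv.swap_apply_of_ne_of_ne hxu hxw] at h1
          by_cases hyu : y = u
          · rw [hyu] at h2 h1
            rw [Equiv.swap_apply_left] at h1
            apply hw1
            rw [hN1N2u, mem_biUnion]
            exact ⟨x, by simp [h2.symm], by simp [h1]⟩
          · by_cases hyw : y = w
            · rw [hyw] at h2 h1
              rw [Equiv.swap_apply_right] at h1
              apply hwA
              rw [hAstar, mem_sdiff]
              constructor
              · rw [mem_biUnion]
                exact ⟨x, by simp [h1.symm], by simp [h2]⟩
              · rw [mem_union]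
                push_neg
                exact ⟨hw2, hw1⟩
            · rw [Equiv.swap_apply_of_ne_of_ne hyu hyw] at h1
              rcases hcommon x y h2 h1 with ⟨hxu', _⟩ | ⟨_, hyu'⟩
              · exact hxu hxu'
              · exact hyu hyu'
  have huniv : N2u ∪ Astar ∪ N1N2u = Finset.univ := by
    apply Finset.eq_univ_iff_forall.mpr key
  calc n = Fintype.card V := hn.symm
    _ = (N2u ∪ Astar ∪ N1N2u).card := by rw [huniv, Finset.card_univ]
    _ ≤ (N2u ∪ Astar).card + N1N2u.card := Finset.card_union_le _ _
    _ ≤ N2u.card + Astar.card + N1N2u.card := by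
        exact Nat.add_le_add_right (Finset.card_union_le _ _) _
end

section
/- Let G1 and G2 be simple graphs on the same finite vertex set of size n that do not pack, and suppose that the edge {u,v} is the unique edge belonging to both G1 and G2 (i.e., E(G1) ∩ E(G2) = {{u,v}}). Then n ≤ |N1*(u)| + |N2(u)| + |B(u)| + |N2(N1(u))|. -/
open SimpleGraph Finset

theorem stmt_11 {V : Type*} [Fintype V] [DecidableEq V]
    (G1 G2 : SimpleGraph V) [DecidableRel G1.Adj] [DecidableRel G2.Adj]
    (n : ℕ) (hn : Fintype.card V = n)
    (hnopack : ¬ ∃ σ : Equiv.Perm V, ∀ x y : V, G2.Adj x y → ¬ G1.Adj (σ x) (σ y))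
    (u v : V) (huv : G1.edgeSet ∩ G2.edgeSet = {s(u, v)})
    (N1star B : Finset V)
    (hN1star : N1star = G1.neighborFinset u
        ∩ (((G2.neighborFinset u).biUnion fun x => G1.neighborFinset x)
          \ (G2.neighborFinset u ∪ ((G1.neighborFinset u).biUnion fun x => G2.neighborFinset x))))
    (hB : B = ((G2.neighborFinset u).biUnion fun x => G1.neighborFinset x)
        \ (G1.neighborFinset u ∪ G2.neighborFinset u
          ∪ ((G1.neighborFinset u).biUnion fun x => G2.neighborFinset x))) :
    n ≤ N1star.card + (G2.neighborFinset u).card + B.card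
      + ((G1.neighborFinset u).biUnion fun x => G2.neighborFinset x).card := by
  subst hn hN1star hB
  have hs : s(u, v) ∈ G1.edgeSet ∩ G2.edgeSet := by rw [huv]; rfl
  have h1uv : G1.Adj u v := hs.1
  have h2uv : G2.Adj u v := hs.2
  have huniq : ∀ x y : V, G2.Adj x y → G1.Adj x y → s(x, y) = s(u, v) := by
    intro x y h2 h1
    have : s(x, y) ∈ G1.edgeSet ∩ G2.edgeSet := ⟨h1, h2⟩
    rw [huv] at this
    exact this
  -- every vertex is covered
  have hcover : ∀ w : V, G2.Adj u w ∨ (∃ x, G2.Adj u x ∧ G1.Adj x w) ∨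
      (∃ x, G1.Adj u x ∧ G2.Adj x w) := by
    intro w
    by_contra hcon
    push_neg at hcon
    obtain ⟨hw2, hw12, hw21⟩ := hcon
    have hwu : w ≠ u := by
      intro h; subst h
      exact hw12 v h2uv (G1.adj_symm h1uv)
    apply hnopack
    refine ⟨Equiv.swap u w, ?_⟩
    intro x y h2 h1
    rcases eq_or_ne u x with rfl | hxu
    · rcases eq_or_ne u y with rfl | hyu
      · exact G2.irrefl h2
      rcases eq_or_ne w y with rfl | hyw
      · exact hw2 h2
      · rw [Equiv.swap_apply_left, Equiv.swap_apply_of_ne_of_ne hyu.symm hyw.symm] at h1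
        exact hw12 y h2 (G1.adj_symm h1)
    rcases eq_or_ne w x with rfl | hxw
    · rcases eq_or_ne u y with rfl | hyu
      · exact hw2 (G2.adj_symm h2)
      rcases eq_or_ne w y with rfl | hyw
      · exact G2.irrefl h2
      · rw [Equiv.swap_apply_right, Equiv.swap_apply_of_ne_of_ne hyu.symm hyw.symm] at h1
        exact hw21 y h1 (G2.adj_symm h2)
    · rw [Equiv.swap_apply_of_ne_of_ne hxu.symm hxw.symm] at h1
      rcases eq_or_ne u y with rfl | hyu
      · rw [Equiv.swap_apply_left] at h1
        exact hw12 x (G2.adj_symm h2) h1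
      rcases eq_or_ne w y with rfl | hyw
      · rw [Equiv.swap_apply_right] at h1
        exact hw21 x (G1.adj_symm h1) h2
      · rw [Equiv.swap_apply_of_ne_of_ne hyu.symm hyw.symm] at h1
        have := huniq x y h2 h1
        rw [Sym2.eq_iff] at this
        rcases this with ⟨rfl, rfl⟩ | ⟨rfl, rfl⟩
        · exact hxu rfl
        · exact hyu rfl
  -- univ ⊆ union of the four sets
  set A := G1.neighborFinset u
        ∩ (((G2.neighborFinset u).biUnion fun x => G1.neighborFinset x)
          \ (G2.neighborFinset u ∪ ((G1.neighborFinset u).biUnion fun x => G2.neighborFinset x)))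
  set Bs := ((G2.neighborFinset u).biUnion fun x => G1.neighborFinset x)
        \ (G1.neighborFinset u ∪ G2.neighborFinset u
          ∪ ((G1.neighborFinset u).biUnion fun x => G2.neighborFinset x))
  have hsub : (Finset.univ : Finset V) ⊆
      A ∪ G2.neighborFinset u ∪ Bs ∪ ((G1.neighborFinset u).biUnion fun x => G2.neighborFinset x) := by
    intro w _
    simp only [A, Bs, mem_union, mem_inter, mem_sdiff, mem_biUnion, mem_neighborFinset]
    rcases hcover w with h | h | h
    · exact Or.inl (Or.inl (Or.inr h))
    · by_cases h2w : G2.Adj u w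
      · exact Or.inl (Or.inl (Or.inr h2w))
      by_cases h21 : ∃ a, G1.Adj u a ∧ G2.Adj a w
      · exact Or.inr h21
      by_cases h1w : G1.Adj u w
      · exact Or.inl (Or.inl (Or.inl ⟨h1w, h, not_or.mpr ⟨h2w, h21⟩⟩))
      · exact Or.inl (Or.inr ⟨h, not_or.mpr ⟨not_or.mpr ⟨h1w, h2w⟩, h21⟩⟩)
    · exact Or.inr h
  calc Fintype.card V = (Finset.univ : Finset V).card := (Finset.card_univ).symm
    _ ≤ _ := Finset.card_le_card hsub
    _ ≤ _ := by
        refine le_trans (Finset.card_union_le _ _) ?_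
        refine Nat.add_le_add_right (le_trans (Finset.card_union_le _ _) ?_) _
        exact Nat.add_le_add_right (Finset.card_union_le _ _) _
end

section
/- Let G1 and G2 be simple graphs on the same finite vertex set of size n that do not pack, and suppose that the edge {u,v} is the unique edge belonging to both G1 and G2 (i.e., E(G1) ∩ E(G2) = {{u,v}}). Then n ≤ |A*(v)| + |A*(u)| + |(N2(u) ∪ N1(N2(u))) ∩ (N2(v) ∪ N1(N2(v)))|. -/
open SimpleGraph Finset

lemma aux_stmt_12 {V : Type*} [Fintype V] [DecidableEq V]
    (G1 G2 : SimpleGraph V) [DecidableRel G1.Adj] [DecidableRel G2.Adj]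
    (hnp : ∀ σ : Equiv.Perm V, ∃ x y : V, G2.Adj x y ∧ G1.Adj (σ x) (σ y))
    (u v z : V) (huv1 : G1.Adj u v) (huv2 : G2.Adj u v)
    (hunique : ∀ x y, G1.Adj x y → G2.Adj x y → s(x, y) = s(u, v))
    (hB : z ∉ (G2.neighborFinset u ∪ ((G2.neighborFinset u).biUnion fun x => G1.neighborFinset x))) :
    z ∈ ((G1.neighborFinset u).biUnion fun x => G2.neighborFinset x)
      \ (G2.neighborFinset u ∪ ((G2.neighborFinset u).biUnion fun x => G1.neighborFinset x)) := by
  rw [mem_union, mem_neighborFinset] at hB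
  push_neg at hB
  obtain ⟨hz1, hz2⟩ := hB
  have hz2' : ∀ w, G2.Adj u w → ¬ G1.Adj w z := by
    intro w hw hwz
    exact hz2 (mem_biUnion.2 ⟨w, (mem_neighborFinset _ _ _).2 hw,
      (mem_neighborFinset _ _ _).2 hwz⟩)
  have hzu : z ≠ u := by
    rintro rfl
    exact hz2' v huv2 huv1.symm
  obtain ⟨x, y, hr, hb⟩ := hnp (Equiv.swap u z)
  refine mem_sdiff.2 ⟨?_, ?_⟩
  swap
  · rw [mem_union, mem_neighborFinset]
    push_neg
    exact ⟨hz1, hz2⟩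
  by_cases hxu : x = u
  · rw [hxu] at hr hb
    by_cases hyz : y = z
    · rw [hyz] at hr; exact absurd hr hz1
    · have hyu : y ≠ u := hr.ne'
      rw [Equiv.swap_apply_left, Equiv.swap_apply_of_ne_of_ne hyu hyz] at hb
      exact absurd hb.symm (hz2' y hr)
  by_cases hxz : x = z
  · rw [hxz] at hr hb
    by_cases hyu : y = u
    · rw [hyu] at hr; exact absurd hr.symm hz1
    · have hyz : y ≠ z := hr.ne'
      rw [Equiv.swap_apply_right, Equiv.swap_apply_of_ne_of_ne hyu hyz] at hb
      exact mem_biUnion.2 ⟨y, (mem_neighborFinset _ _ _).2 hb,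
        (mem_neighborFinset _ _ _).2 hr.symm⟩
  rw [Equiv.swap_apply_of_ne_of_ne hxu hxz] at hb
  by_cases hyu : y = u
  · rw [hyu] at hr hb
    rw [Equiv.swap_apply_left] at hb
    exact absurd hb (hz2' x hr.symm)
  by_cases hyz : y = z
  · rw [hyz] at hr hb
    rw [Equiv.swap_apply_right] at hb
    exact mem_biUnion.2 ⟨x, (mem_neighborFinset _ _ _).2 hb.symm,
      (mem_neighborFinset _ _ _).2 hr⟩
  · rw [Equiv.swap_apply_of_ne_of_ne hyu hyz] at hb
    have := hunique x y hb hr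
    rw [Sym2.eq_iff] at this
    rcases this with ⟨h1, _⟩ | ⟨_, h2⟩
    · exact (hxu h1).elim
    · exact (hyu h2).elim

theorem stmt_12 {V : Type*} [Fintype V] [DecidableEq V]
    (G1 G2 : SimpleGraph V) [DecidableRel G1.Adj] [DecidableRel G2.Adj]
    (n : ℕ) (hn : Fintype.card V = n)
    (hnopack : ¬ ∃ σ : Equiv.Perm V, ∀ x y : V, G2.Adj x y → ¬ G1.Adj (σ x) (σ y))
    (u v : V) (huv : G1.edgeSet ∩ G2.edgeSet = {s(u, v)})
    (Astaru Astarv : Finset V)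
    (hAstaru : Astaru = ((G1.neighborFinset u).biUnion fun x => G2.neighborFinset x)
        \ (G2.neighborFinset u ∪ ((G2.neighborFinset u).biUnion fun x => G1.neighborFinset x)))
    (hAstarv : Astarv = ((G1.neighborFinset v).biUnion fun x => G2.neighborFinset x)
        \ (G2.neighborFinset v ∪ ((G2.neighborFinset v).biUnion fun x => G1.neighborFinset x))) :
    n ≤ Astarv.card + Astaru.card
      + ((G2.neighborFinset u ∪ ((G2.neighborFinset u).biUnion fun x => G1.neighborFinset x))
        ∩ (G2.neighborFinset v ∪ ((G2.neighborFinset v).biUnion fun x => G1.neighborFinset x))).card := by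
  push_neg at hnopack
  have hmem : s(u, v) ∈ G1.edgeSet ∩ G2.edgeSet := huv ▸ rfl
  have huv1 : G1.Adj u v := hmem.1
  have huv2 : G2.Adj u v := hmem.2
  have hunique : ∀ x y, G1.Adj x y → G2.Adj x y → s(x, y) = s(u, v) := by
    intro x y h1 h2
    have : s(x, y) ∈ G1.edgeSet ∩ G2.edgeSet := ⟨h1, h2⟩
    rwa [huv] at this
  set Bu := (G2.neighborFinset u ∪ ((G2.neighborFinset u).biUnion fun x => G1.neighborFinset x))
    with hBu
  set Bv := (G2.neighborFinset v ∪ ((G2.neighborFinset v).biUnion fun x => G1.neighborFinset x))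
    with hBv
  have hsub : (univ : Finset V) ⊆ Astarv ∪ Astaru ∪ (Bu ∩ Bv) := by
    intro z _
    by_cases hu : z ∈ Bu
    · by_cases hv : z ∈ Bv
      · exact mem_union.2 (Or.inr (mem_inter.2 ⟨hu, hv⟩))
      · refine mem_union.2 (Or.inl (mem_union.2 (Or.inl ?_)))
        rw [hAstarv]
        exact aux_stmt_12 G1 G2 hnopack v u z huv1.symm huv2.symm
          (fun x y h1 h2 => (hunique x y h1 h2).trans (Sym2.eq_swap)) hv
    · refine mem_union.2 (Or.inl (mem_union.2 (Or.inr ?_)))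
      rw [hAstaru]
      exact aux_stmt_12 G1 G2 hnopack u v z huv1 huv2 hunique hu
  calc n = (univ : Finset V).card := by rw [card_univ, hn]
    _ ≤ (Astarv ∪ Astaru ∪ (Bu ∩ Bv)).card := card_le_card hsub
    _ ≤ (Astarv ∪ Astaru).card + (Bu ∩ Bv).card := card_union_le _ _
    _ ≤ Astarv.card + Astaru.card + (Bu ∩ Bv).card :=
        Nat.add_le_add_right (card_union_le _ _) _
end

section
/- Let t ≥ 2 and Δ2 ≥ 1 be integers. Let G1 and G2 be simple graphs on the same finite vertex set of size n that do not pack, such that the edge {u,v} is the unique edge belonging to both G1 and G2 (i.e., E(G1) ∩ E(G2) = {{u,v}}), the maximum codegree of G1 satisfies Δ^∧(G1) < t, and Δ(G2) ≤ Δ2. Then for every b ∈ B(u), |N1(b) ∩ A*(u)| ≥ |A*(u)|/Δ2 − t·(Δ2+1). -/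
open SimpleGraph Finset

theorem stmt_14 {V : Type*} [Fintype V] [DecidableEq V]
    (G1 G2 : SimpleGraph V) [DecidableRel G1.Adj] [DecidableRel G2.Adj]
    (n t Δ2 : ℕ) (ht : 2 ≤ t) (hΔ2pos : 1 ≤ Δ2)
    (hn : Fintype.card V = n)
    (hnopack : ¬ ∃ σ : Equiv.Perm V, ∀ x y : V, G2.Adj x y → ¬ G1.Adj (σ x) (σ y))
    (u v : V) (huv : G1.edgeSet ∩ G2.edgeSet = {s(u, v)})
    (hcodeg : ∀ x y : V, x ≠ y →
      (G1.neighborFinset x ∩ G1.neighborFinset y).card < t)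
    (hΔ2 : G2.maxDegree ≤ Δ2)
    (Astar B : Finset V)
    (hAstar : Astar = ((G1.neighborFinset u).biUnion fun x => G2.neighborFinset x)
        \ (G2.neighborFinset u ∪ ((G2.neighborFinset u).biUnion fun x => G1.neighborFinset x)))
    (hB : B = ((G2.neighborFinset u).biUnion fun x => G1.neighborFinset x)
        \ (G1.neighborFinset u ∪ G2.neighborFinset u
          ∪ ((G1.neighborFinset u).biUnion fun x => G2.neighborFinset x))) :
    ∀ b ∈ B, ((G1.neighborFinset b ∩ Astar).card : ℝ)
      ≥ (Astar.card : ℝ) / (Δ2 : ℝ) - (t : ℝ) * ((Δ2 : ℝ) + 1) := by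
  intro b hb
  have hmem : s(u,v) ∈ G1.edgeSet ∩ G2.edgeSet := by rw [huv]; rfl
  have h1uv : G1.Adj u v := hmem.1
  have h2uv : G2.Adj u v := hmem.2
  have huniq : ∀ x z : V, G1.Adj x z → G2.Adj x z →
      (x = u ∧ z = v) ∨ (x = v ∧ z = u) := by
    intro x z h1 h2
    have hx : s(x,z) ∈ G1.edgeSet ∩ G2.edgeSet := ⟨h1, h2⟩
    rw [huv, Set.mem_singleton_iff, Sym2.eq_iff] at hx
    exact hx
  -- membership characterizations
  have hA : ∀ a, a ∈ Astar ↔ (∃ x, G1.Adj u x ∧ G2.Adj x a) ∧ ¬ G2.Adj u a ∧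
      ∀ w, G2.Adj u w → ¬ G1.Adj w a := by
    intro a
    simp [hAstar, mem_sdiff, mem_biUnion, mem_union, mem_neighborFinset, not_or, and_assoc]
  have hBm : (∃ w, G2.Adj u w ∧ G1.Adj w b) ∧ ¬ G1.Adj u b ∧ ¬ G2.Adj u b ∧
      ∀ x, G1.Adj u x → ¬ G2.Adj x b := by
    have h := hb
    rw [hB] at h
    simpa [mem_sdiff, mem_biUnion, mem_union, mem_neighborFinset, not_or, and_assoc] using h
  obtain ⟨⟨w0, hw0, hw0b⟩, hbu1, hbu2, hbN⟩ := hBm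
  -- every vertex is in N2(u) ∪ N1(N2(u)) ∪ N2(N1(u))
  have everyP : ∀ y : V, G2.Adj u y ∨ (∃ w, G2.Adj u w ∧ G1.Adj w y) ∨
      (∃ x, G1.Adj u x ∧ G2.Adj x y) := by
    intro y
    by_contra hcon
    push_neg at hcon
    obtain ⟨h1, h2, h3⟩ := hcon
    apply hnopack
    refine ⟨Equiv.swap u y, fun x z hxz hadj => ?_⟩
    rcases eq_or_ne x u with rfl | hxu
    · rcases eq_or_ne z y with rfl | hzy
      · exact h1 hxz
      · rw [Equiv.swap_apply_left, Equiv.swap_apply_of_ne_of_ne hxz.ne' hzy] at hadj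
        exact h2 z hxz hadj.symm
    rcases eq_or_ne x y with rfl | hxy
    · rcases eq_or_ne z u with rfl | hzu
      · exact h1 hxz.symm
      · rw [Equiv.swap_apply_right, Equiv.swap_apply_of_ne_of_ne hzu hxz.ne'] at hadj
        exact h3 z hadj hxz.symm
    · rw [Equiv.swap_apply_of_ne_of_ne hxu hxy] at hadj
      rcases eq_or_ne z u with rfl | hzu
      · rw [Equiv.swap_apply_left] at hadj
        exact h2 x hxz.symm hadj
      rcases eq_or_ne z y with rfl | hzy
      · rw [Equiv.swap_apply_right] at hadj
        exact h3 x hadj.symm hxz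
      · rw [Equiv.swap_apply_of_ne_of_ne hzu hzy] at hadj
        rcases huniq x z hadj hxz with ⟨hx', _⟩ | ⟨_, hz'⟩
        · exact hxu hx'
        · exact hzu hz'
  -- the 3-cycle argument
  have key : ∀ a ∈ Astar, ∃ y, G2.Adj a y ∧ G1.Adj b y := by
    intro a ha
    by_contra hcon
    push_neg at hcon
    obtain ⟨⟨x0, hx0u, hx0a⟩, hau, haN⟩ := (hA a).1 ha
    have hau' : a ≠ u := by
      rintro rfl
      exact haN v h2uv h1uv.symm
    have hbu' : b ≠ u := by
      rintro rfl
      exact hbN v h1uv h2uv.symm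
    have hab : a ≠ b := by
      rintro rfl
      exact hbN x0 hx0u hx0a
    set σ : Equiv.Perm V := (Equiv.swap u a).trans (Equiv.swap u b) with hσdef
    have hσu : σ u = a := by
      simp [hσdef, Equiv.swap_apply_of_ne_of_ne hau' hab]
    have hσa : σ a = b := by
      simp [hσdef]
    have hσb : σ b = u := by
      simp [hσdef, Equiv.swap_apply_of_ne_of_ne hbu' hab.symm]
    have hσo : ∀ w, w ≠ u → w ≠ a → w ≠ b → σ w = w := by
      intro w h1 h2 h3
      simp [hσdef, Equiv.swap_apply_of_ne_of_ne h1 h2, Equiv.swap_apply_of_ne_of_ne h1 h3]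
    apply hnopack
    refine ⟨σ, fun x z hxz hadj => ?_⟩
    rcases eq_or_ne x u with rfl | hxu
    · rw [hσu] at hadj
      rcases eq_or_ne z a with rfl | hza
      · exact hau hxz
      rcases eq_or_ne z b with rfl | hzb
      · exact hbu2 hxz
      · rw [hσo z hxz.ne' hza hzb] at hadj
        exact haN z hxz hadj.symm
    rcases eq_or_ne x a with rfl | hxa
    · rw [hσa] at hadj
      rcases eq_or_ne z u with rfl | hzu
      · exact hau hxz.symm
      rcases eq_or_ne z b with rfl | hzb
      · rw [hσb] at hadj
        exact hbu1 hadj.symm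
      · rw [hσo z hzu hxz.ne' hzb] at hadj
        exact hcon z hxz hadj
    rcases eq_or_ne x b with rfl | hxb
    · rw [hσb] at hadj
      rcases eq_or_ne z u with rfl | hzu
      · exact hbu2 hxz.symm
      rcases eq_or_ne z a with rfl | hza
      · rw [hσa] at hadj
        exact hbu1 hadj
      · rw [hσo z hzu hza hxz.ne'] at hadj
        exact hbN z hadj hxz.symm
    · rw [hσo x hxu hxa hxb] at hadj
      rcases eq_or_ne z u with rfl | hzu
      · rw [hσu] at hadj
        exact haN x hxz.symm hadj
      rcases eq_or_ne z a with rfl | hza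
      · rw [hσa] at hadj
        exact hcon x hxz.symm hadj.symm
      rcases eq_or_ne z b with rfl | hzb
      · rw [hσb] at hadj
        exact hbN x hadj.symm hxz
      · rw [hσo z hzu hza hzb] at hadj
        rcases huniq x z hadj hxz with ⟨hx', _⟩ | ⟨_, hz'⟩
        · exact hxu hx'
        · exact hzu hz'
  -- counting
  have hdeg2 : ∀ y : V, (G2.neighborFinset y).card ≤ Δ2 := fun y =>
    le_trans (G2.degree_le_maxDegree y) hΔ2
  have hcover : Astar ⊆ (G1.neighborFinset b).biUnion
      (fun y => G2.neighborFinset y ∩ Astar) := by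
    intro a ha
    obtain ⟨y, hay, hby⟩ := key a ha
    exact mem_biUnion.2 ⟨y, (mem_neighborFinset _ _ _).2 hby,
      mem_inter.2 ⟨(mem_neighborFinset _ _ _).2 hay.symm, ha⟩⟩
  have h1 : Astar.card ≤ ∑ y ∈ G1.neighborFinset b, (G2.neighborFinset y ∩ Astar).card :=
    le_trans (card_le_card hcover) (card_biUnion_le)
  -- split the sum
  have hsplit : ∑ y ∈ G1.neighborFinset b, (G2.neighborFinset y ∩ Astar).card
      = ∑ y ∈ G1.neighborFinset b ∩ Astar, (G2.neighborFinset y ∩ Astar).card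
        + ∑ y ∈ G1.neighborFinset b \ Astar, (G2.neighborFinset y ∩ Astar).card :=
    (sum_inter_add_sum_sdiff _ _ _).symm
  have hbound1 : ∑ y ∈ G1.neighborFinset b ∩ Astar, (G2.neighborFinset y ∩ Astar).card
      ≤ (G1.neighborFinset b ∩ Astar).card * Δ2 := by
    calc ∑ y ∈ G1.neighborFinset b ∩ Astar, (G2.neighborFinset y ∩ Astar).card
        ≤ ∑ _y ∈ G1.neighborFinset b ∩ Astar, Δ2 :=
          sum_le_sum fun y _ => le_trans (card_le_card inter_subset_left) (hdeg2 y)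
      _ = (G1.neighborFinset b ∩ Astar).card * Δ2 := by rw [sum_const, smul_eq_mul]
  -- bound on the rest of N1(b)
  have hQsub : G1.neighborFinset b \ Astar ⊆ G2.neighborFinset u ∪
      (G2.neighborFinset u).biUnion
        (fun w => G1.neighborFinset b ∩ G1.neighborFinset w) := by
    intro y hy
    obtain ⟨hyb, hyA⟩ := mem_sdiff.1 hy
    have hcase2 : (∃ w, G2.Adj u w ∧ G1.Adj w y) → y ∈ G2.neighborFinset u ∪
        (G2.neighborFinset u).biUnion
          (fun w => G1.neighborFinset b ∩ G1.neighborFinset w) := by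
      rintro ⟨w, hw, hwy⟩
      exact mem_union_right _ (mem_biUnion.2 ⟨w, (mem_neighborFinset _ _ _).2 hw,
        mem_inter.2 ⟨hyb, (mem_neighborFinset _ _ _).2 hwy⟩⟩)
    rcases everyP y with h | h | ⟨x, hx, hxy⟩
    · exact mem_union_left _ ((mem_neighborFinset _ _ _).2 h)
    · exact hcase2 h
    · by_cases hp : G2.Adj u y
      · exact mem_union_left _ ((mem_neighborFinset _ _ _).2 hp)
      · have hq : ¬ ∀ w, G2.Adj u w → ¬ G1.Adj w y := fun hq =>
          hyA ((hA y).2 ⟨⟨x, hx, hxy⟩, hp, hq⟩)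
        push_neg at hq
        exact hcase2 hq
  have hQcard : (G1.neighborFinset b \ Astar).card ≤ Δ2 * t := by
    have hbw : ∀ w ∈ G2.neighborFinset u,
        (G1.neighborFinset b ∩ G1.neighborFinset w).card ≤ t - 1 := by
      intro w hw
      have hw' : G2.Adj u w := (mem_neighborFinset _ _ _).1 hw
      have hne : b ≠ w := by
        rintro rfl
        exact hbu2 hw'
      have := hcodeg b w hne
      omega
    have hbi : ((G2.neighborFinset u).biUnion
        (fun w => G1.neighborFinset b ∩ G1.neighborFinset w)).card ≤ Δ2 * (t - 1) := by
      calc ((G2.neighborFinset u).biUnion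
          (fun w => G1.neighborFinset b ∩ G1.neighborFinset w)).card
          ≤ ∑ w ∈ G2.neighborFinset u,
            (G1.neighborFinset b ∩ G1.neighborFinset w).card := card_biUnion_le
        _ ≤ ∑ _w ∈ G2.neighborFinset u, (t-1) := sum_le_sum hbw
        _ = (G2.neighborFinset u).card * (t-1) := by rw [sum_const, smul_eq_mul]
        _ ≤ Δ2 * (t-1) := Nat.mul_le_mul_right _ (hdeg2 u)
    calc (G1.neighborFinset b \ Astar).card
        ≤ (G2.neighborFinset u ∪ (G2.neighborFinset u).biUnion
            (fun w => G1.neighborFinset b ∩ G1.neighborFinset w)).card :=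
          card_le_card hQsub
      _ ≤ (G2.neighborFinset u).card + ((G2.neighborFinset u).biUnion
            (fun w => G1.neighborFinset b ∩ G1.neighborFinset w)).card := card_union_le _ _
      _ ≤ Δ2 + Δ2 * (t-1) := Nat.add_le_add (hdeg2 u) hbi
      _ = Δ2 * t := by
          have : 1 + (t-1) = t := by omega
          calc Δ2 + Δ2 * (t-1) = Δ2 * (1 + (t-1)) := by ring
            _ = Δ2 * t := by rw [this]
  have hbound2 : ∑ y ∈ G1.neighborFinset b \ Astar, (G2.neighborFinset y ∩ Astar).card
      ≤ (Δ2 * t) * Δ2 := by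
    calc ∑ y ∈ G1.neighborFinset b \ Astar, (G2.neighborFinset y ∩ Astar).card
        ≤ ∑ _y ∈ G1.neighborFinset b \ Astar, Δ2 :=
          sum_le_sum fun y _ => le_trans (card_le_card inter_subset_left) (hdeg2 y)
      _ = (G1.neighborFinset b \ Astar).card * Δ2 := by rw [sum_const, smul_eq_mul]
      _ ≤ (Δ2 * t) * Δ2 := Nat.mul_le_mul_right _ hQcard
  have hmain : Astar.card ≤ (G1.neighborFinset b ∩ Astar).card * Δ2 + (Δ2 * t) * Δ2 := by
    calc Astar.card ≤ _ := h1
      _ = _ := hsplit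
      _ ≤ _ := Nat.add_le_add hbound1 hbound2
  -- real arithmetic
  have hΔ2R : (0:ℝ) < (Δ2:ℝ) := by
    have : (0:ℕ) < Δ2 := hΔ2pos
    exact_mod_cast this
  rw [ge_iff_le, sub_le_iff_le_add, div_le_iff₀ hΔ2R]
  have hmainR : (Astar.card : ℝ) ≤ ((G1.neighborFinset b ∩ Astar).card : ℝ) * Δ2
      + ((Δ2:ℝ) * t) * Δ2 := by exact_mod_cast hmain
  have htR : (2:ℝ) ≤ (t:ℝ) := by exact_mod_cast ht
  nlinarith [hΔ2R, hmainR, htR]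
end

section
/- Let t ≥ 1, Δ1 ≥ 0 and Δ2 ≥ 0 be integers and let G1 and G2 be simple graphs on the same finite vertex set with Δ(G1) ≤ Δ1, Δ(G2) ≤ Δ2, and the maximum codegree of G1 satisfying Δ^∧(G1) < t. Then for any two vertices u and v, writing p = |N2(u) ∩ N2(v)|, one has |N1(N2(u)) ∩ N1(N2(v))| ≤ Δ1·p + (t−1)·(Δ2 − p)². -/
open SimpleGraph Finset

theorem stmt_15 {V : Type*} [Fintype V] [DecidableEq V]
    (G1 G2 : SimpleGraph V) [DecidableRel G1.Adj] [DecidableRel G2.Adj]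
    (t Δ1 Δ2 : ℕ) (ht : 1 ≤ t)
    (hΔ1 : G1.maxDegree ≤ Δ1) (hΔ2 : G2.maxDegree ≤ Δ2)
    (hcodeg : ∀ x y : V, x ≠ y →
      (G1.neighborFinset x ∩ G1.neighborFinset y).card < t)
    (u v : V) (p : ℕ) (hp : p = (G2.neighborFinset u ∩ G2.neighborFinset v).card) :
    (((((G2.neighborFinset u).biUnion fun x => G1.neighborFinset x)
      ∩ ((G2.neighborFinset v).biUnion fun x => G1.neighborFinset x)).card : ℝ))
      ≤ (Δ1 : ℝ) * (p : ℝ) + ((t : ℝ) - 1) * ((Δ2 : ℝ) - (p : ℝ)) ^ 2 := by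
  classical
  set P := G2.neighborFinset u ∩ G2.neighborFinset v with hPdef
  set A := G2.neighborFinset u \ P with hAdef
  set B := G2.neighborFinset v \ P with hBdef
  have hsub : (((G2.neighborFinset u).biUnion fun x => G1.neighborFinset x)
      ∩ ((G2.neighborFinset v).biUnion fun x => G1.neighborFinset x))
      ⊆ (P.biUnion fun x => G1.neighborFinset x) ∪
        ((A ×ˢ B).biUnion fun q => G1.neighborFinset q.1 ∩ G1.neighborFinset q.2) := by
    intro w hw
    simp only [mem_inter, mem_biUnion] at hw
    obtain ⟨⟨x, hx, hwx⟩, ⟨y, hy, hwy⟩⟩ := hw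
    by_cases hxP : x ∈ P
    · exact mem_union_left _ (mem_biUnion.2 ⟨x, hxP, hwx⟩)
    by_cases hyP : y ∈ P
    · exact mem_union_left _ (mem_biUnion.2 ⟨y, hyP, hwy⟩)
    · refine mem_union_right _ (mem_biUnion.2 ⟨(x, y), ?_, ?_⟩)
      · exact mem_product.2 ⟨mem_sdiff.2 ⟨hx, hxP⟩, mem_sdiff.2 ⟨hy, hyP⟩⟩
      · exact mem_inter.2 ⟨hwx, hwy⟩
  have hdeg1 : ∀ x : V, (G1.neighborFinset x).card ≤ Δ1 := fun x => by
    rw [card_neighborFinset_eq_degree]; exact (G1.degree_le_maxDegree x).trans hΔ1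
  have hdeg2 : ∀ x : V, (G2.neighborFinset x).card ≤ Δ2 := fun x => by
    rw [card_neighborFinset_eq_degree]; exact (G2.degree_le_maxDegree x).trans hΔ2
  have h1 : (P.biUnion fun x => G1.neighborFinset x).card ≤ p * Δ1 := by
    rw [hp]; exact card_biUnion_le_card_mul _ _ _ fun x _ => hdeg1 x
  have hne : ∀ q ∈ A ×ˢ B, q.1 ≠ q.2 := by
    rintro ⟨x, y⟩ hq h
    rw [mem_product] at hq
    obtain ⟨hx, hy⟩ := hq
    rw [mem_sdiff] at hx hy
    exact hx.2 (mem_inter.2 ⟨hx.1, h ▸ hy.1⟩)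
  have h2 : ((A ×ˢ B).biUnion fun q => G1.neighborFinset q.1 ∩ G1.neighborFinset q.2).card
      ≤ (A.card * B.card) * (t - 1) := by
    have := card_biUnion_le_card_mul (A ×ˢ B)
      (fun q => G1.neighborFinset q.1 ∩ G1.neighborFinset q.2) (t - 1)
      (fun q hq => Nat.le_sub_one_of_lt (hcodeg q.1 q.2 (hne q hq)))
    simpa [card_product] using this
  have hpu : p ≤ (G2.neighborFinset u).card := hp ▸ card_le_card inter_subset_left
  have hpv : p ≤ (G2.neighborFinset v).card := hp ▸ card_le_card inter_subset_right
  have hpΔ : p ≤ Δ2 := hpu.trans (hdeg2 u)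
  have hA : A.card ≤ Δ2 - p := by
    rw [hAdef, card_sdiff_of_subset inter_subset_left, ← hp]
    exact Nat.sub_le_sub_right (hdeg2 u) p
  have hB : B.card ≤ Δ2 - p := by
    rw [hBdef, card_sdiff_of_subset inter_subset_right, ← hp]
    exact Nat.sub_le_sub_right (hdeg2 v) p
  have hnat : (((G2.neighborFinset u).biUnion fun x => G1.neighborFinset x)
      ∩ ((G2.neighborFinset v).biUnion fun x => G1.neighborFinset x)).card
      ≤ p * Δ1 + ((Δ2 - p) * (Δ2 - p)) * (t - 1) := by
    calc _ ≤ ((P.biUnion fun x => G1.neighborFinset x) ∪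
        ((A ×ˢ B).biUnion fun q => G1.neighborFinset q.1 ∩ G1.neighborFinset q.2)).card :=
          card_le_card hsub
      _ ≤ (P.biUnion fun x => G1.neighborFinset x).card +
        ((A ×ˢ B).biUnion fun q => G1.neighborFinset q.1 ∩ G1.neighborFinset q.2).card :=
          card_union_le _ _
      _ ≤ p * Δ1 + ((Δ2 - p) * (Δ2 - p)) * (t - 1) := by
          refine Nat.add_le_add h1 (h2.trans ?_)
          exact Nat.mul_le_mul_right _ (Nat.mul_le_mul hA hB)
  have := (Nat.cast_le (α := ℝ)).2 hnat
  calc (((((G2.neighborFinset u).biUnion fun x => G1.neighborFinset x)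
      ∩ ((G2.neighborFinset v).biUnion fun x => G1.neighborFinset x)).card : ℝ))
      ≤ ((p * Δ1 + ((Δ2 - p) * (Δ2 - p)) * (t - 1) : ℕ) : ℝ) := this
    _ ≤ (Δ1 : ℝ) * (p : ℝ) + ((t : ℝ) - 1) * ((Δ2 : ℝ) - (p : ℝ)) ^ 2 := by
        push_cast [Nat.cast_sub hpΔ, Nat.cast_sub ht]
        ring_nf
        nlinarith [sq_nonneg ((Δ2 : ℝ) - p)]
end

section
/- Let Δ2 ≥ 0 be an integer and 0 < ε < 1/2 a real number, and let G2 be a simple graph on a finite vertex set with Δ(G2) ≤ Δ2 such that |N2(x) ∩ N2(y)| ≥ (1−ε)·Δ2 for every edge xy of G2. Let u be a vertex and let S be a set of vertices disjoint from N2(u) ∪ {u} such that every a ∈ S has a neighbour in N2(u) (in G2). Then |S| ≤ ε·|N2(u)| / (1−2ε). -/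
open SimpleGraph Finset

theorem stmt_17 {V : Type*} [Fintype V] [DecidableEq V]
    (G2 : SimpleGraph V) [DecidableRel G2.Adj]
    (Δ2 : ℕ) (ε : ℝ) (hε0 : 0 < ε) (hε1 : ε < 1 / 2)
    (hΔ2 : G2.maxDegree ≤ Δ2)
    (hcodeg : ∀ x y : V, G2.Adj x y →
      ((G2.neighborFinset x ∩ G2.neighborFinset y).card : ℝ) ≥ (1 - ε) * (Δ2 : ℝ))
    (u : V) (S : Finset V)
    (hdisj : Disjoint S (insert u (G2.neighborFinset u)))
    (hnbr : ∀ a ∈ S, ∃ x ∈ G2.neighborFinset u, G2.Adj a x) :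
    (S.card : ℝ) ≤ ε * ((G2.neighborFinset u).card : ℝ) / (1 - 2 * ε) := by
  classical
  set N := G2.neighborFinset u with hN
  have h2ε : (0:ℝ) < 1 - 2 * ε := by linarith
  have hdegle : ∀ v : V, (G2.degree v : ℝ) ≤ (Δ2 : ℝ) := by
    intro v
    exact_mod_cast le_trans (G2.degree_le_maxDegree v) hΔ2
  by_cases hΔ0 : Δ2 = 0
  · -- then N is empty, hence S is empty
    have hNe : N = ∅ := by
      rw [Finset.eq_empty_iff_forall_notMem]
      intro x hx
      have := G2.degree_le_maxDegree u
      have hd : G2.degree u = 0 := by omega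
      have : x ∈ G2.neighborFinset u := hx
      rw [← SimpleGraph.card_neighborFinset_eq_degree, Finset.card_eq_zero] at hd
      simp [hN, hd] at this
    have hSe : S = ∅ := by
      rw [Finset.eq_empty_iff_forall_notMem]
      intro a ha
      obtain ⟨x, hx, -⟩ := hnbr a ha
      rw [hNe] at hx
      simp at hx
    rw [hSe]
    simp only [Finset.card_empty, Nat.cast_zero]
    apply div_nonneg _ (le_of_lt h2ε)
    positivity
  have hΔpos : (0:ℝ) < (Δ2 : ℝ) := by
    exact_mod_cast Nat.pos_of_ne_zero hΔ0
  -- Lemma A : each a in S has many neighbours in N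
  have lemA : ∀ a ∈ S, (1 - 2*ε) * (Δ2:ℝ) ≤ ((G2.neighborFinset a ∩ N).card : ℝ) := by
    intro a ha
    obtain ⟨x, hxN, hax⟩ := hnbr a ha
    have hxu : G2.Adj x u := ((G2.mem_neighborFinset u x).mp hxN).symm
    have h1 : (1 - ε) * (Δ2:ℝ) ≤ ((G2.neighborFinset a ∩ G2.neighborFinset x).card : ℝ) :=
      hcodeg a x hax
    have h2 : (1 - ε) * (Δ2:ℝ) ≤ ((G2.neighborFinset x ∩ N).card : ℝ) := hcodeg x u hxu
    have hsub : G2.neighborFinset a ∩ G2.neighborFinset x ⊆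
        (G2.neighborFinset a ∩ N) ∪ (G2.neighborFinset x \ N) := by
      intro z hz
      simp only [Finset.mem_inter, Finset.mem_union, Finset.mem_sdiff] at *
      tauto
    have hc1 : ((G2.neighborFinset a ∩ G2.neighborFinset x).card : ℕ) ≤
        (G2.neighborFinset a ∩ N).card + (G2.neighborFinset x \ N).card :=
      le_trans (Finset.card_le_card hsub) (Finset.card_union_le _ _)
    have hc2 : (G2.neighborFinset x \ N).card + (G2.neighborFinset x ∩ N).card
        = G2.degree x := by
      rw [Finset.card_sdiff_add_card_inter, SimpleGraph.card_neighborFinset_eq_degree]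
    have hdx := hdegle x
    have hc1' : ((G2.neighborFinset a ∩ G2.neighborFinset x).card : ℝ) ≤
        ((G2.neighborFinset a ∩ N).card : ℝ) + ((G2.neighborFinset x \ N).card : ℝ) := by
      exact_mod_cast hc1
    have hc2' : ((G2.neighborFinset x \ N).card : ℝ) + ((G2.neighborFinset x ∩ N).card : ℝ)
        = (G2.degree x : ℝ) := by exact_mod_cast hc2
    linarith
  -- Lemma B : each y in N has few neighbours in S
  have lemB : ∀ y ∈ N, ((G2.neighborFinset y ∩ S).card : ℝ) ≤ ε * (Δ2:ℝ) := by
    intro y hyN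
    have hyu : G2.Adj y u := ((G2.mem_neighborFinset u y).mp hyN).symm
    have h2 : (1 - ε) * (Δ2:ℝ) ≤ ((G2.neighborFinset y ∩ N).card : ℝ) := hcodeg y u hyu
    have hdisj2 : Disjoint (G2.neighborFinset y ∩ S) (G2.neighborFinset y ∩ N) := by
      apply Finset.disjoint_left.mpr
      intro z hz1 hz2
      have hz1' := (Finset.mem_inter.mp hz1).2
      have hz2' := (Finset.mem_inter.mp hz2).2
      exact (Finset.disjoint_left.mp hdisj hz1') (Finset.mem_insert_of_mem hz2')
    have hsub : (G2.neighborFinset y ∩ S) ∪ (G2.neighborFinset y ∩ N) ⊆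
        G2.neighborFinset y := by
      intro z hz
      rcases Finset.mem_union.mp hz with h | h
      · exact (Finset.mem_inter.mp h).1
      · exact (Finset.mem_inter.mp h).1
    have hc : (G2.neighborFinset y ∩ S).card + (G2.neighborFinset y ∩ N).card ≤
        G2.degree y := by
      rw [← Finset.card_union_of_disjoint hdisj2, ← SimpleGraph.card_neighborFinset_eq_degree]
      exact Finset.card_le_card hsub
    have hc' : ((G2.neighborFinset y ∩ S).card : ℝ) + ((G2.neighborFinset y ∩ N).card : ℝ) ≤
        (G2.degree y : ℝ) := by exact_mod_cast hc
    have := hdegle y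
    linarith
  -- double counting
  have hswap : ∑ a ∈ S, ((G2.neighborFinset a ∩ N).card) =
      ∑ y ∈ N, ((G2.neighborFinset y ∩ S).card) := by
    have e1 : ∀ a, (G2.neighborFinset a ∩ N) = N.filter (fun y => G2.Adj a y) := by
      intro a
      ext z
      simp [Finset.mem_inter, Finset.mem_filter, G2.mem_neighborFinset, and_comm]
    have e2 : ∀ y, (G2.neighborFinset y ∩ S) = S.filter (fun a => G2.Adj a y) := by
      intro y
      ext z
      simp only [Finset.mem_inter, Finset.mem_filter, G2.mem_neighborFinset, and_comm]
      rw [G2.adj_comm]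
    simp_rw [e1, e2, Finset.card_filter]
    exact Finset.sum_comm
  have hlow : (S.card : ℝ) * ((1 - 2*ε) * (Δ2:ℝ)) ≤
      ∑ a ∈ S, ((G2.neighborFinset a ∩ N).card : ℝ) := by
    calc (S.card : ℝ) * ((1 - 2*ε) * (Δ2:ℝ)) = ∑ _a ∈ S, (1 - 2*ε) * (Δ2:ℝ) := by
          rw [Finset.sum_const, nsmul_eq_mul]
      _ ≤ _ := Finset.sum_le_sum lemA
  have hhigh : ∑ y ∈ N, ((G2.neighborFinset y ∩ S).card : ℝ) ≤ (N.card : ℝ) * (ε * (Δ2:ℝ)) := by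
    calc ∑ y ∈ N, ((G2.neighborFinset y ∩ S).card : ℝ) ≤ ∑ _y ∈ N, ε * (Δ2:ℝ) :=
          Finset.sum_le_sum lemB
      _ = (N.card : ℝ) * (ε * (Δ2:ℝ)) := by rw [Finset.sum_const, nsmul_eq_mul]
  have hswap' : ∑ a ∈ S, ((G2.neighborFinset a ∩ N).card : ℝ) =
      ∑ y ∈ N, ((G2.neighborFinset y ∩ S).card : ℝ) := by exact_mod_cast hswap
  have hkey : (S.card : ℝ) * ((1 - 2*ε) * (Δ2:ℝ)) ≤ (N.card : ℝ) * (ε * (Δ2:ℝ)) := by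
    linarith
  have hkey2 : (S.card : ℝ) * (1 - 2*ε) ≤ ε * (N.card : ℝ) := by
    nlinarith
  rw [le_div_iff₀ h2ε]
  linarith
end

section
/- Let t ≥ 2 and Δ2 ≥ 0 be integers and 0 < ε < 1/2 a real number. Let G1 and G2 be simple graphs on the same finite vertex set of size n that do not pack, such that the edge {u,v} is the unique edge belonging to both G1 and G2 (i.e., E(G1) ∩ E(G2) = {{u,v}}), the maximum codegree of G1 satisfies Δ^∧(G1) < t, Δ(G2) ≤ Δ2, and |N2(x) ∩ N2(y)| ≥ (1−ε)·Δ2 for every edge xy of G2. If |A*(u)| ≥ 1 + Δ2 + ε·Δ2/(1−2ε), then |B(u)| ≤ (t−1)·Δ2². -/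
open SimpleGraph Finset

theorem stmt_18 {V : Type*} [Fintype V] [DecidableEq V]
    (G1 G2 : SimpleGraph V) [DecidableRel G1.Adj] [DecidableRel G2.Adj]
    (n t Δ2 : ℕ) (ε : ℝ) (ht : 2 ≤ t) (hε0 : 0 < ε) (hε1 : ε < 1 / 2)
    (hn : Fintype.card V = n)
    (hnopack : ¬ ∃ σ : Equiv.Perm V, ∀ x y : V, G2.Adj x y → ¬ G1.Adj (σ x) (σ y))
    (u v : V) (huv : G1.edgeSet ∩ G2.edgeSet = {s(u, v)})
    (hcodeg : ∀ x y : V, x ≠ y →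
      (G1.neighborFinset x ∩ G1.neighborFinset y).card < t)
    (hΔ2 : G2.maxDegree ≤ Δ2)
    (hadjcodeg : ∀ x y : V, G2.Adj x y →
      ((G2.neighborFinset x ∩ G2.neighborFinset y).card : ℝ) ≥ (1 - ε) * (Δ2 : ℝ))
    (Astar B : Finset V)
    (hAstar : Astar = ((G1.neighborFinset u).biUnion fun x => G2.neighborFinset x)
        \ (G2.neighborFinset u ∪ ((G2.neighborFinset u).biUnion fun x => G1.neighborFinset x)))
    (hB : B = ((G2.neighborFinset u).biUnion fun x => G1.neighborFinset x)
        \ (G1.neighborFinset u ∪ G2.neighborFinset u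
          ∪ ((G1.neighborFinset u).biUnion fun x => G2.neighborFinset x)))
    (hAbig : (Astar.card : ℝ) ≥ 1 + (Δ2 : ℝ) + ε * (Δ2 : ℝ) / (1 - 2 * ε)) :
    (B.card : ℝ) ≤ ((t : ℝ) - 1) * (Δ2 : ℝ) ^ 2 := by
  -- common edge facts
  have hmemuv : s(u, v) ∈ G1.edgeSet ∩ G2.edgeSet := by
    rw [huv]; exact Set.mem_singleton _
  have hadj1uv : G1.Adj u v := hmemuv.1
  have hadj2uv : G2.Adj u v := hmemuv.2
  -- degree bound
  have hdeg : ∀ x : V, (G2.neighborFinset x).card ≤ Δ2 := fun x =>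
    le_trans (G2.degree_le_maxDegree x) hΔ2
  have hdegR : ∀ x : V, ((G2.neighborFinset x).card : ℝ) ≤ (Δ2 : ℝ) := fun x => by
    exact_mod_cast hdeg x
  -- the bad set
  set Bad : Finset V :=
    Astar.filter (fun a => ((G2.neighborFinset a) ∩ (G2.neighborFinset u)).Nonempty) with hBad
  -- Astar membership facts
  have hAstarFacts : ∀ a ∈ Astar, (¬ G2.Adj u a) ∧ (∀ x, G2.Adj u x → ¬ G1.Adj x a)
      ∧ (∃ y, G1.Adj u y ∧ G2.Adj y a) := by
    intro a ha
    rw [hAstar] at ha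
    obtain ⟨hin, hout⟩ := Finset.mem_sdiff.mp ha
    simp only [Finset.mem_union, Finset.mem_biUnion, SimpleGraph.mem_neighborFinset, not_or,
      not_exists, not_and] at hout hin
    exact ⟨hout.1, hout.2, hin⟩
  -- B membership facts
  have hBFacts : ∀ w ∈ B, (∃ x, G2.Adj u x ∧ G1.Adj x w) ∧ (¬ G1.Adj u w)
      ∧ (¬ G2.Adj u w) ∧ (∀ y, G1.Adj u y → ¬ G2.Adj y w) := by
    intro w hw
    rw [hB] at hw
    obtain ⟨hin, hout⟩ := Finset.mem_sdiff.mp hw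
    simp only [Finset.mem_union, Finset.mem_biUnion, SimpleGraph.mem_neighborFinset, not_or,
      not_exists, not_and] at hout hin
    exact ⟨hin, hout.1.1, hout.1.2, hout.2⟩
  -- claim 1 : every bad vertex has many neighbours in N2(u)
  have claim1 : ∀ a ∈ Bad,
      ((1 : ℝ) - 2 * ε) * (Δ2 : ℝ) ≤ ((G2.neighborFinset a ∩ G2.neighborFinset u).card : ℝ) := by
    intro a ha
    obtain ⟨haA, hne⟩ := Finset.mem_filter.mp ha
    obtain ⟨z, hz⟩ := hne
    rw [Finset.mem_inter, SimpleGraph.mem_neighborFinset, SimpleGraph.mem_neighborFinset] at hz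
    have h1 := hadjcodeg a z hz.1
    have h2 := hadjcodeg z u hz.2.symm
    have hsub : (G2.neighborFinset a ∩ G2.neighborFinset z) ∩
        (G2.neighborFinset z ∩ G2.neighborFinset u)
        ⊆ G2.neighborFinset a ∩ G2.neighborFinset u := by
      intro c hc
      simp only [Finset.mem_inter] at hc ⊢
      exact ⟨hc.1.1, hc.2.2⟩
    have hUsub : (G2.neighborFinset a ∩ G2.neighborFinset z) ∪
        (G2.neighborFinset z ∩ G2.neighborFinset u) ⊆ G2.neighborFinset z := by
      intro c hc
      rcases Finset.mem_union.mp hc with h | h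
      · exact (Finset.mem_inter.mp h).2
      · exact (Finset.mem_inter.mp h).1
    have hU : ((G2.neighborFinset a ∩ G2.neighborFinset z) ∪
        (G2.neighborFinset z ∩ G2.neighborFinset u)).card ≤ Δ2 :=
      le_trans (Finset.card_le_card hUsub) (hdeg z)
    have hie := Finset.card_inter_add_card_union
      (G2.neighborFinset a ∩ G2.neighborFinset z) (G2.neighborFinset z ∩ G2.neighborFinset u)
    have hsc := Finset.card_le_card hsub
    have hieR : (((G2.neighborFinset a ∩ G2.neighborFinset z) ∩
          (G2.neighborFinset z ∩ G2.neighborFinset u)).card : ℝ)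
        + (((G2.neighborFinset a ∩ G2.neighborFinset z) ∪
          (G2.neighborFinset z ∩ G2.neighborFinset u)).card : ℝ)
        = ((G2.neighborFinset a ∩ G2.neighborFinset z).card : ℝ)
        + ((G2.neighborFinset z ∩ G2.neighborFinset u).card : ℝ) := by exact_mod_cast hie
    have hscR : (((G2.neighborFinset a ∩ G2.neighborFinset z) ∩
          (G2.neighborFinset z ∩ G2.neighborFinset u)).card : ℝ)
        ≤ ((G2.neighborFinset a ∩ G2.neighborFinset u).card : ℝ) := by exact_mod_cast hsc
    have hUR : (((G2.neighborFinset a ∩ G2.neighborFinset z) ∪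
          (G2.neighborFinset z ∩ G2.neighborFinset u)).card : ℝ) ≤ (Δ2 : ℝ) := by
      exact_mod_cast hU
    linarith
  -- double counting : sum over Bad of |N2 a ∩ N2 u| equals a sum over N2 u
  have hswap : (∑ a ∈ Bad, (G2.neighborFinset a ∩ G2.neighborFinset u).card)
      = ∑ c ∈ G2.neighborFinset u, (Bad.filter (fun a => G2.Adj a c)).card := by
    have h1 : ∀ a : V, G2.neighborFinset a ∩ G2.neighborFinset u
        = (G2.neighborFinset u).filter (fun c => G2.Adj a c) := by
      intro a
      ext c
      simp only [Finset.mem_inter, Finset.mem_filter, SimpleGraph.mem_neighborFinset]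
      tauto
    calc (∑ a ∈ Bad, (G2.neighborFinset a ∩ G2.neighborFinset u).card)
        = ∑ a ∈ Bad, ∑ c ∈ G2.neighborFinset u, if G2.Adj a c then 1 else 0 := by
          refine Finset.sum_congr rfl fun a _ => ?_
          rw [h1 a, Finset.card_filter]
      _ = ∑ c ∈ G2.neighborFinset u, ∑ a ∈ Bad, if G2.Adj a c then 1 else 0 :=
          Finset.sum_comm
      _ = ∑ c ∈ G2.neighborFinset u, (Bad.filter (fun a => G2.Adj a c)).card := by
          refine Finset.sum_congr rfl fun c _ => ?_
          rw [Finset.card_filter]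
  -- per-c bound
  have hperc : ∀ c ∈ G2.neighborFinset u,
      ((Bad.filter (fun a => G2.Adj a c)).card : ℝ) ≤ ε * (Δ2 : ℝ) := by
    intro c hc
    have hc' : G2.Adj u c := by rwa [SimpleGraph.mem_neighborFinset] at hc
    have hsub : Bad.filter (fun a => G2.Adj a c) ⊆ G2.neighborFinset c \ G2.neighborFinset u := by
      intro a ha
      obtain ⟨haB, hac⟩ := Finset.mem_filter.mp ha
      obtain ⟨haA, _⟩ := Finset.mem_filter.mp haB
      have hnot := (hAstarFacts a haA).1
      rw [Finset.mem_sdiff, SimpleGraph.mem_neighborFinset, SimpleGraph.mem_neighborFinset]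
      exact ⟨hac.symm, hnot⟩
    have h1 : (Bad.filter (fun a => G2.Adj a c)).card
        ≤ (G2.neighborFinset c \ G2.neighborFinset u).card := Finset.card_le_card hsub
    have h2 := Finset.card_sdiff_add_card_inter (G2.neighborFinset c) (G2.neighborFinset u)
    have h3 := hadjcodeg c u hc'.symm
    have h2R : ((G2.neighborFinset c \ G2.neighborFinset u).card : ℝ)
        + ((G2.neighborFinset c ∩ G2.neighborFinset u).card : ℝ)
        = ((G2.neighborFinset c).card : ℝ) := by exact_mod_cast h2
    have h1R : ((Bad.filter (fun a => G2.Adj a c)).card : ℝ)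
        ≤ ((G2.neighborFinset c \ G2.neighborFinset u).card : ℝ) := by exact_mod_cast h1
    have := hdegR c
    linarith
  -- conclude |Bad| (1-2ε) Δ2 ≤ ε Δ2 Δ2
  have hBadBound : (Bad.card : ℝ) * (((1 : ℝ) - 2 * ε) * (Δ2 : ℝ))
      ≤ ε * (Δ2 : ℝ) * (Δ2 : ℝ) := by
    have hlow : (Bad.card : ℝ) * (((1 : ℝ) - 2 * ε) * (Δ2 : ℝ))
        ≤ ∑ a ∈ Bad, ((G2.neighborFinset a ∩ G2.neighborFinset u).card : ℝ) := by
      have := Finset.card_nsmul_le_sum Bad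
        (fun a => ((G2.neighborFinset a ∩ G2.neighborFinset u).card : ℝ))
        (((1 : ℝ) - 2 * ε) * (Δ2 : ℝ)) claim1
      simpa [nsmul_eq_mul] using this
    have hsumcast : (∑ a ∈ Bad, ((G2.neighborFinset a ∩ G2.neighborFinset u).card : ℝ))
        = ∑ c ∈ G2.neighborFinset u, ((Bad.filter (fun a => G2.Adj a c)).card : ℝ) := by
      have := congrArg (fun m : ℕ => (m : ℝ)) hswap
      push_cast at this
      exact this
    have hhigh : (∑ c ∈ G2.neighborFinset u, ((Bad.filter (fun a => G2.Adj a c)).card : ℝ))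
        ≤ (Δ2 : ℝ) * (ε * (Δ2 : ℝ)) := by
      calc (∑ c ∈ G2.neighborFinset u, ((Bad.filter (fun a => G2.Adj a c)).card : ℝ))
          ≤ ∑ _c ∈ G2.neighborFinset u, ε * (Δ2 : ℝ) := Finset.sum_le_sum hperc
        _ = ((G2.neighborFinset u).card : ℝ) * (ε * (Δ2 : ℝ)) := by
            rw [Finset.sum_const, nsmul_eq_mul]
        _ ≤ (Δ2 : ℝ) * (ε * (Δ2 : ℝ)) := by
            have h0 : (0 : ℝ) ≤ ε * (Δ2 : ℝ) := by positivity
            exact mul_le_mul_of_nonneg_right (hdegR u) h0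
    nlinarith [hlow, hsumcast, hhigh]
  -- |Bad| < |Astar|
  have hBadlt : Bad.card < Astar.card := by
    by_cases hΔ0 : Δ2 = 0
    · have hN2u : G2.neighborFinset u = ∅ := by
        apply Finset.card_eq_zero.mp
        have := hdeg u
        omega
      have hBade : Bad = ∅ := by
        apply Finset.filter_eq_empty_iff.mpr
        intro a _
        rw [hN2u, Finset.inter_empty]
        exact Finset.not_nonempty_empty
      have hA1 : (1 : ℝ) ≤ (Astar.card : ℝ) := by
        have hd : (0 : ℝ) < 1 - 2 * ε := by linarith
        have h0 : (0:ℝ) ≤ ε * (Δ2 : ℝ) / (1 - 2 * ε) := by positivity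
        have h1 : (0:ℝ) ≤ (Δ2 : ℝ) := Nat.cast_nonneg _
        linarith [hAbig]
      have : 1 ≤ Astar.card := by exact_mod_cast hA1
      rw [hBade]
      simpa using this
    · have hΔpos : (0 : ℝ) < (Δ2 : ℝ) := by
        exact_mod_cast Nat.pos_of_ne_zero hΔ0
      have hd : (0 : ℝ) < 1 - 2 * ε := by linarith
      by_contra hle
      push_neg at hle
      have hle' : (Astar.card : ℝ) ≤ (Bad.card : ℝ) := by exact_mod_cast hle
      have e1 : ε * (Δ2 : ℝ) / (1 - 2 * ε) * (1 - 2 * ε) = ε * (Δ2 : ℝ) :=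
        div_mul_cancel₀ _ hd.ne'
      nlinarith [hBadBound, hAbig, hle', e1, mul_pos hd hΔpos,
        mul_pos (mul_pos (show (0:ℝ) < 1 + (Δ2:ℝ) by linarith) hd) hΔpos]
  -- pick a good vertex a0
  have hex : ∃ a0 ∈ Astar, a0 ∉ Bad := by
    by_contra hcon
    push_neg at hcon
    have : Astar ⊆ Bad := fun a ha => hcon a ha
    have := Finset.card_le_card this
    omega
  obtain ⟨a0, ha0A, ha0nB⟩ := hex
  obtain ⟨hA2, hA1, y0, hy0a, hy0b⟩ := hAstarFacts a0 ha0A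
  have hdisj : ∀ z, G2.Adj a0 z → ¬ G2.Adj u z := by
    intro z h1 h2
    exact ha0nB (Finset.mem_filter.mpr ⟨ha0A,
      ⟨z, Finset.mem_inter.mpr ⟨by rwa [SimpleGraph.mem_neighborFinset],
        by rwa [SimpleGraph.mem_neighborFinset]⟩⟩⟩)
  -- a0 ≠ u
  have ha0u : a0 ≠ u := by
    intro h
    apply hA1 v hadj2uv
    rw [h]
    exact hadj1uv.symm
  -- key lemma : every w in B has a G1-neighbour in N2(a0)
  have key : ∀ w ∈ B, ∃ z, G2.Adj a0 z ∧ G1.Adj w z := by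
    intro w hwB
    obtain ⟨hW1, hW2, hW3, hW4⟩ := hBFacts w hwB
    by_contra hne
    push_neg at hne
    -- hne : ∀ z, G2.Adj a0 z → ¬ G1.Adj w z
    have hwu : w ≠ u := by
      intro h
      apply hW4 v hadj1uv
      rw [h]
      exact hadj2uv.symm
    have hwa0 : w ≠ a0 := by
      intro h
      apply hW4 y0 hy0a
      rw [h]
      exact hy0b
    set σ : Equiv.Perm V := (Equiv.swap u a0).trans (Equiv.swap u w) with hσ
    have sσu : σ u = a0 := by
      rw [hσ, Equiv.trans_apply, Equiv.swap_apply_left,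
        Equiv.swap_apply_of_ne_of_ne ha0u (Ne.symm hwa0)]
    have sσa : σ a0 = w := by
      rw [hσ, Equiv.trans_apply, Equiv.swap_apply_right, Equiv.swap_apply_left]
    have sσw : σ w = u := by
      rw [hσ, Equiv.trans_apply, Equiv.swap_apply_of_ne_of_ne hwu hwa0,
        Equiv.swap_apply_right]
    have sσo : ∀ x, x ≠ u → x ≠ a0 → x ≠ w → σ x = x := by
      intro x h1 h2 h3
      rw [hσ, Equiv.trans_apply, Equiv.swap_apply_of_ne_of_ne h1 h2,
        Equiv.swap_apply_of_ne_of_ne h1 h3]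
    apply hnopack
    refine ⟨σ, ?_⟩
    intro x y hxy hconf
    rcases eq_or_ne x u with hx | hxu
    · rw [hx] at hxy hconf
      rcases eq_or_ne y u with hy | hyu
      · rw [hy] at hxy; exact G2.irrefl hxy
      rcases eq_or_ne y a0 with hy | hya
      · rw [hy] at hxy; exact hA2 hxy
      rcases eq_or_ne y w with hy | hyw
      · rw [hy] at hxy; exact hW3 hxy
      · rw [sσu, sσo y hyu hya hyw] at hconf
        exact hA1 y hxy hconf.symm
    · rcases eq_or_ne x a0 with hx | hxa
      · rw [hx] at hxy hconf
        rcases eq_or_ne y u with hy | hyu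
        · rw [hy] at hxy; exact hA2 hxy.symm
        rcases eq_or_ne y a0 with hy | hya
        · rw [hy] at hxy; exact G2.irrefl hxy
        rcases eq_or_ne y w with hy | hyw
        · rw [hy] at hconf; rw [sσa, sσw] at hconf; exact hW2 hconf.symm
        · rw [sσa, sσo y hyu hya hyw] at hconf
          exact hne y hxy hconf
      · rcases eq_or_ne x w with hx | hxw
        · rw [hx] at hxy hconf
          rcases eq_or_ne y u with hy | hyu
          · rw [hy] at hxy; exact hW3 hxy.symm
          rcases eq_or_ne y a0 with hy | hya
          · rw [hy] at hconf; rw [sσw, sσa] at hconf; exact hW2 hconf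
          rcases eq_or_ne y w with hy | hyw
          · rw [hy] at hxy; exact G2.irrefl hxy
          · rw [sσw, sσo y hyu hya hyw] at hconf
            exact hW4 y hconf hxy.symm
        · rw [sσo x hxu hxa hxw] at hconf
          rcases eq_or_ne y u with hy | hyu
          · rw [hy] at hxy hconf; rw [sσu] at hconf
            exact hA1 x hxy.symm hconf
          rcases eq_or_ne y a0 with hy | hya
          · rw [hy] at hxy hconf; rw [sσa] at hconf
            exact hne x hxy.symm hconf.symm
          rcases eq_or_ne y w with hy | hyw
          · rw [hy] at hxy hconf; rw [sσw] at hconf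
            exact hW4 x hconf.symm hxy
          · rw [sσo y hyu hya hyw] at hconf
            have hmem : s(x, y) ∈ G1.edgeSet ∩ G2.edgeSet := ⟨hconf, hxy⟩
            rw [huv] at hmem
            rcases Sym2.eq_iff.mp (Set.mem_singleton_iff.mp hmem) with ⟨h1, _⟩ | ⟨_, h2⟩
            · exact hxu h1
            · exact hyu h2
  -- covering B
  have cover : B ⊆ (G2.neighborFinset a0).biUnion (fun z =>
      (G2.neighborFinset u).biUnion (fun x => G1.neighborFinset z ∩ G1.neighborFinset x)) := by
    intro w hw
    obtain ⟨z, hz1, hz2⟩ := key w hw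
    obtain ⟨⟨x0, hx01, hx02⟩, _, _, _⟩ := hBFacts w hw
    rw [Finset.mem_biUnion]
    refine ⟨z, by rwa [SimpleGraph.mem_neighborFinset], ?_⟩
    rw [Finset.mem_biUnion]
    refine ⟨x0, by rwa [SimpleGraph.mem_neighborFinset], ?_⟩
    rw [Finset.mem_inter, SimpleGraph.mem_neighborFinset, SimpleGraph.mem_neighborFinset]
    exact ⟨hz2.symm, hx02⟩
  -- counting
  have hcount : B.card ≤ Δ2 * (Δ2 * (t - 1)) := by
    calc B.card ≤ ((G2.neighborFinset a0).biUnion (fun z =>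
        (G2.neighborFinset u).biUnion (fun x =>
          G1.neighborFinset z ∩ G1.neighborFinset x))).card := Finset.card_le_card cover
      _ ≤ ∑ z ∈ G2.neighborFinset a0, ((G2.neighborFinset u).biUnion (fun x =>
          G1.neighborFinset z ∩ G1.neighborFinset x)).card := Finset.card_biUnion_le
      _ ≤ ∑ _z ∈ G2.neighborFinset a0, (Δ2 * (t - 1)) := by
          refine Finset.sum_le_sum fun z hz => ?_
          have hz' : G2.Adj a0 z := by rwa [SimpleGraph.mem_neighborFinset] at hz
          calc ((G2.neighborFinset u).biUnion (fun x =>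
              G1.neighborFinset z ∩ G1.neighborFinset x)).card
              ≤ ∑ x ∈ G2.neighborFinset u, (G1.neighborFinset z ∩ G1.neighborFinset x).card :=
                Finset.card_biUnion_le
            _ ≤ ∑ _x ∈ G2.neighborFinset u, (t - 1) := by
                refine Finset.sum_le_sum fun x hx => ?_
                have hx' : G2.Adj u x := by rwa [SimpleGraph.mem_neighborFinset] at hx
                have hzx : z ≠ x := by
                  intro h
                  exact hdisj z hz' (h ▸ hx')
                have := hcodeg z x hzx
                omega
            _ = (G2.neighborFinset u).card * (t - 1) := by
                rw [Finset.sum_const, smul_eq_mul]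
            _ ≤ Δ2 * (t - 1) := Nat.mul_le_mul_right _ (hdeg u)
      _ = (G2.neighborFinset a0).card * (Δ2 * (t - 1)) := by
          rw [Finset.sum_const, smul_eq_mul]
      _ ≤ Δ2 * (Δ2 * (t - 1)) := Nat.mul_le_mul_right _ (hdeg a0)
  -- finish
  have hcR : (B.card : ℝ) ≤ (Δ2 : ℝ) * ((Δ2 : ℝ) * ((t : ℝ) - 1)) := by
    have h1 : ((B.card : ℕ) : ℝ) ≤ ((Δ2 * (Δ2 * (t - 1)) : ℕ) : ℝ) := by
      exact_mod_cast hcount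
    have ht1 : 1 ≤ t := by omega
    push_cast [Nat.cast_sub ht1] at h1
    exact h1
  nlinarith [hcR]
end

section
/- Let t ≥ 2, Δ1 ≥ 0 and Δ2 ≥ 0 be integers and 0 < ε < 1/2 a real number. Let G1 and G2 be simple graphs on the same finite vertex set of size n that do not pack, such that the edge {u,v} is the unique edge belonging to both G1 and G2 (i.e., E(G1) ∩ E(G2) = {{u,v}}), the maximum codegree of G1 satisfies Δ^∧(G1) < t, Δ(G1) ≤ Δ1, Δ(G2) ≤ Δ2, and |N2(x) ∩ N2(y)| ≥ (1−ε)·Δ2 for every edge xy of G2. Then |N2(N1(u))| ≤ ((1+ε)/2)·Δ1·Δ2 + ((1−ε)/2)·(t−1)·Δ2² + ((3−ε)/2)·Δ2. -/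
open SimpleGraph Finset

theorem stmt_19 {V : Type*} [Fintype V] [DecidableEq V]
    (G1 G2 : SimpleGraph V) [DecidableRel G1.Adj] [DecidableRel G2.Adj]
    (n t Δ1 Δ2 : ℕ) (ε : ℝ) (ht : 2 ≤ t) (hε0 : 0 < ε) (hε1 : ε < 1 / 2)
    (hn : Fintype.card V = n)
    (hnopack : ¬ ∃ σ : Equiv.Perm V, ∀ x y : V, G2.Adj x y → ¬ G1.Adj (σ x) (σ y))
    (u v : V) (huv : G1.edgeSet ∩ G2.edgeSet = {s(u, v)})
    (hcodeg : ∀ x y : V, x ≠ y →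
      (G1.neighborFinset x ∩ G1.neighborFinset y).card < t)
    (hΔ1 : G1.maxDegree ≤ Δ1) (hΔ2 : G2.maxDegree ≤ Δ2)
    (hadjcodeg : ∀ x y : V, G2.Adj x y →
      ((G2.neighborFinset x ∩ G2.neighborFinset y).card : ℝ) ≥ (1 - ε) * (Δ2 : ℝ)) :
    ((((G1.neighborFinset u).biUnion fun x => G2.neighborFinset x).card : ℝ))
      ≤ (1 + ε) / 2 * (Δ1 : ℝ) * (Δ2 : ℝ)
        + (1 - ε) / 2 * ((t : ℝ) - 1) * (Δ2 : ℝ) ^ 2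
        + (3 - ε) / 2 * (Δ2 : ℝ) := by
  classical
  have h1t : 1 ≤ t := by omega
  have hN1 : ∀ z w : V, w ∈ G1.neighborFinset z ↔ G1.Adj z w := fun z w =>
    SimpleGraph.mem_neighborFinset G1 z w
  have hN2 : ∀ z w : V, w ∈ G2.neighborFinset z ↔ G2.Adj z w := fun z w =>
    SimpleGraph.mem_neighborFinset G2 z w
  set S : Finset V := G1.neighborFinset u with hS
  set U : Finset V := S.biUnion (fun x => G2.neighborFinset x) with hUdef
  have hdeg2 : ∀ x : V, (G2.neighborFinset x).card ≤ Δ2 := by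
    intro x
    rw [G2.card_neighborFinset_eq_degree]
    exact le_trans (G2.degree_le_maxDegree x) hΔ2
  have hdegS : S.card ≤ Δ1 := by
    rw [hS, G1.card_neighborFinset_eq_degree]
    exact le_trans (G1.degree_le_maxDegree u) hΔ1
  have hcommon : ∀ a b : V, G1.Adj a b → G2.Adj a b →
      (a = u ∧ b = v) ∨ (a = v ∧ b = u) := by
    intro a b h1 h2
    have hm : s(a, b) ∈ G1.edgeSet ∩ G2.edgeSet := ⟨h1, h2⟩
    rw [huv, Set.mem_singleton_iff, Sym2.eq_iff] at hm
    exact hm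
  -- the swap argument: an S-vertex with no G2-neighbour in S must have a
  -- G1-neighbour in N2(u), else swapping u and x yields a packing
  have hswap : ∀ x : V, x ∈ S → x ≠ v → G2.neighborFinset x ∩ S = ∅ →
      ∃ w ∈ G2.neighborFinset u, G1.Adj x w := by
    intro x hxS hxv hxempty
    have hxadj : G1.Adj u x := (hN1 u x).mp hxS
    have hxu : x ≠ u := fun h => G1.irrefl (h ▸ hxadj)
    by_contra hcon
    push_neg at hcon
    apply hnopack
    refine ⟨Equiv.swap u x, fun a b hab hadj => ?_⟩
    have hmemS : ∀ z : V, G1.Adj u z → z ∈ S := fun z hz => (hN1 u z).mpr hz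
    by_cases hau : a = u
    · by_cases hbx : b = x
      · rw [hau, hbx, Equiv.swap_apply_left, Equiv.swap_apply_right] at hadj
        rw [hau, hbx] at hab
        rcases hcommon u x hadj.symm hab with ⟨_, h2⟩ | ⟨_, h2⟩
        · exact hxv h2
        · exact hxu h2
      · have hbu : b ≠ u := fun h => G2.irrefl (by rw [hau, h] at hab; exact hab)
        rw [hau, Equiv.swap_apply_left, Equiv.swap_apply_of_ne_of_ne hbu hbx] at hadj
        rw [hau] at hab
        exact hcon b ((hN2 u b).mpr hab) hadj
    · by_cases hax : a = x
      · rw [hax, Equiv.swap_apply_right] at hadj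
        rw [hax] at hab
        by_cases hbu : b = u
        · rw [hbu, Equiv.swap_apply_left] at hadj
          rw [hbu] at hab
          rcases hcommon u x hadj hab.symm with ⟨_, h2⟩ | ⟨_, h2⟩
          · exact hxv h2
          · exact hxu h2
        · by_cases hbx : b = x
          · rw [hbx] at hab; exact G2.irrefl hab
          · rw [Equiv.swap_apply_of_ne_of_ne hbu hbx] at hadj
            have hbS : b ∈ S := hmemS b hadj
            have hmem : b ∈ G2.neighborFinset x ∩ S :=
              Finset.mem_inter.mpr ⟨(hN2 x b).mpr hab, hbS⟩
            rw [hxempty] at hmem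
            exact absurd hmem (Finset.notMem_empty b)
      · rw [Equiv.swap_apply_of_ne_of_ne hau hax] at hadj
        by_cases hbu : b = u
        · rw [hbu, Equiv.swap_apply_left] at hadj
          rw [hbu] at hab
          exact hcon a ((hN2 u a).mpr hab.symm) hadj.symm
        · by_cases hbx : b = x
          · rw [hbx, Equiv.swap_apply_right] at hadj
            rw [hbx] at hab
            have haS : a ∈ S := hmemS a hadj.symm
            have hmem : a ∈ G2.neighborFinset x ∩ S :=
              Finset.mem_inter.mpr ⟨(hN2 x a).mpr hab.symm, haS⟩
            rw [hxempty] at hmem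
            exact absurd hmem (Finset.notMem_empty a)
          · rw [Equiv.swap_apply_of_ne_of_ne hbu hbx] at hadj
            rcases hcommon a b hadj hab with ⟨h1, _⟩ | ⟨_, h2⟩
            · exact hau h1
            · exact hbu h2
  -- the set of S-vertices with no G2-neighbour inside S is small
  set I' : Finset V := S.filter (fun x => G2.neighborFinset x ∩ S = ∅) with hI'def
  have hI : I'.card ≤ Δ2 * (t - 1) + 1 := by
    have hsub : I' ⊆ insert v
        ((G2.neighborFinset u).biUnion (fun w => G1.neighborFinset w ∩ S)) := by
      intro x hx
      rcases Finset.mem_filter.mp hx with ⟨hxS, hxp⟩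
      by_cases hxv : x = v
      · exact Finset.mem_insert.mpr (Or.inl hxv)
      · obtain ⟨w, hw, hadj⟩ := hswap x hxS hxv hxp
        exact Finset.mem_insert.mpr (Or.inr (Finset.mem_biUnion.mpr
          ⟨w, hw, Finset.mem_inter.mpr ⟨(hN1 w x).mpr hadj.symm, hxS⟩⟩))
    calc I'.card ≤ _ := Finset.card_le_card hsub
      _ ≤ ((G2.neighborFinset u).biUnion
            (fun w => G1.neighborFinset w ∩ S)).card + 1 := Finset.card_insert_le _ _
      _ ≤ (∑ w ∈ G2.neighborFinset u, (G1.neighborFinset w ∩ S).card) + 1 := by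
          gcongr
          exact Finset.card_biUnion_le
      _ ≤ (G2.neighborFinset u).card * (t - 1) + 1 := by
          gcongr
          have h := Finset.sum_le_card_nsmul (G2.neighborFinset u)
            (fun w => (G1.neighborFinset w ∩ S).card) (t - 1) ?_
          · simpa [smul_eq_mul] using h
          · intro w hw
            show (G1.neighborFinset w ∩ S).card ≤ t - 1
            have hwu : w ≠ u := ((hN2 u w).mp hw).ne'
            have hlt := hcodeg w u hwu
            rw [← hS] at hlt
            omega
      _ ≤ Δ2 * (t - 1) + 1 := by
          gcongr
          exact hdeg2 u
  -- the double count
  set U1 : Finset V := U.filter (fun w => (G2.neighborFinset w ∩ S).card = 1) with hU1def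
  set U2 : Finset V := U.filter (fun w => ¬ (G2.neighborFinset w ∩ S).card = 1) with hU2def
  have hcards : U1.card + U2.card = U.card :=
    Finset.card_filter_add_card_filter_not _
  have hd1 : ∀ w ∈ U, 1 ≤ (G2.neighborFinset w ∩ S).card := by
    intro w hw
    rw [hUdef] at hw
    obtain ⟨x, hx, hwx⟩ := Finset.mem_biUnion.mp hw
    have hxm : x ∈ G2.neighborFinset w ∩ S := Finset.mem_inter.mpr
      ⟨(hN2 w x).mpr ((hN2 x w).mp hwx).symm, hx⟩
    exact Finset.card_pos.mpr ⟨x, hxm⟩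
  have hsum1 : U1.card + 2 * U2.card ≤ ∑ w ∈ U, (G2.neighborFinset w ∩ S).card := by
    rw [← Finset.sum_filter_add_sum_filter_not U
      (fun w => (G2.neighborFinset w ∩ S).card = 1)]
    have e1 : ∑ w ∈ U1, (G2.neighborFinset w ∩ S).card = U1.card := by
      rw [Finset.sum_congr rfl (fun w hw => (Finset.mem_filter.mp hw).2)]
      simp
      rfl
    have e2 : 2 * U2.card ≤ ∑ w ∈ U2, (G2.neighborFinset w ∩ S).card := by
      have h := Finset.card_nsmul_le_sum U2
        (fun w => (G2.neighborFinset w ∩ S).card) 2 ?_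
      · simpa [smul_eq_mul, mul_comm] using h
      · intro w hw
        show 2 ≤ (G2.neighborFinset w ∩ S).card
        rcases Finset.mem_filter.mp hw with ⟨hwU, hne⟩
        have := hd1 w hwU
        omega
    rw [← hU1def, ← hU2def, e1]
    omega
  have hsum2 : ∑ w ∈ U, (G2.neighborFinset w ∩ S).card
      = ∑ x ∈ S, (G2.neighborFinset x).card := by
    have h1 : ∀ w : V, (G2.neighborFinset w ∩ S).card
        = ∑ x ∈ S, if G2.Adj w x then 1 else 0 := by
      intro w
      have he : G2.neighborFinset w ∩ S = S.filter (fun x => G2.Adj w x) := by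
        ext z
        simp [Finset.mem_filter, Finset.mem_inter, SimpleGraph.mem_neighborFinset, and_comm]
      rw [he, Finset.card_filter]
    calc ∑ w ∈ U, (G2.neighborFinset w ∩ S).card
        = ∑ w ∈ U, ∑ x ∈ S, if G2.Adj w x then 1 else 0 :=
          Finset.sum_congr rfl (fun w _ => h1 w)
      _ = ∑ x ∈ S, ∑ w ∈ U, if G2.Adj w x then 1 else 0 := Finset.sum_comm
      _ = ∑ x ∈ S, (U.filter (fun w => G2.Adj w x)).card :=
          Finset.sum_congr rfl (fun x _ => (Finset.card_filter _ _).symm)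
      _ = ∑ x ∈ S, (G2.neighborFinset x).card := by
          refine Finset.sum_congr rfl (fun x hx => ?_)
          congr 1
          ext w
          simp only [Finset.mem_filter]
          rw [hN2 x w]
          constructor
          · rintro ⟨_, h⟩; exact h.symm
          · intro h
            refine ⟨?_, h.symm⟩
            rw [hUdef]
            exact Finset.mem_biUnion.mpr ⟨x, hx, (hN2 x w).mpr h⟩
  have hk : U1.card + 2 * U2.card ≤ S.card * Δ2 := by
    refine le_trans hsum1 (le_trans (le_of_eq hsum2) ?_)
    have h := Finset.sum_le_card_nsmul S (fun x => (G2.neighborFinset x).card) Δ2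
      (fun x _ => hdeg2 x)
    simpa [smul_eq_mul] using h
  -- bounding |U1|
  set Sg : Finset V := S.filter (fun x => ¬ G2.neighborFinset x ∩ S = ∅) with hSgdef
  have hIS : I'.card + Sg.card = S.card :=
    Finset.card_filter_add_card_filter_not _
  have hU1bound : (U1.card : ℝ) ≤ (Sg.card : ℝ) * (ε * Δ2) + (I'.card : ℝ) * Δ2 := by
    have hsubset : U1 ⊆ S.biUnion (fun x => G2.neighborFinset x ∩ U1) := by
      intro w hw
      have hwU : w ∈ U := (Finset.mem_filter.mp hw).1
      rw [hUdef] at hwU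
      obtain ⟨x, hx, hwx⟩ := Finset.mem_biUnion.mp hwU
      exact Finset.mem_biUnion.mpr ⟨x, hx, Finset.mem_inter.mpr ⟨hwx, hw⟩⟩
    have h0 : U1.card ≤ ∑ x ∈ S, (G2.neighborFinset x ∩ U1).card :=
      le_trans (Finset.card_le_card hsubset) (Finset.card_biUnion_le)
    have h0' : (U1.card : ℝ) ≤ ∑ x ∈ S, ((G2.neighborFinset x ∩ U1).card : ℝ) := by
      exact_mod_cast h0
    have hsplit : ∑ x ∈ S, ((G2.neighborFinset x ∩ U1).card : ℝ)
        = ∑ x ∈ I', ((G2.neighborFinset x ∩ U1).card : ℝ)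
          + ∑ x ∈ Sg, ((G2.neighborFinset x ∩ U1).card : ℝ) :=
      (Finset.sum_filter_add_sum_filter_not S _ _).symm
    have hIbound : ∑ x ∈ I', ((G2.neighborFinset x ∩ U1).card : ℝ)
        ≤ (I'.card : ℝ) * Δ2 := by
      have h := Finset.sum_le_card_nsmul I'
        (fun x => ((G2.neighborFinset x ∩ U1).card : ℝ)) (Δ2 : ℝ) ?_
      · simpa [nsmul_eq_mul] using h
      · intro x _
        show ((G2.neighborFinset x ∩ U1).card : ℝ) ≤ (Δ2 : ℝ)
        have hle : (G2.neighborFinset x ∩ U1).card ≤ Δ2 :=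
          le_trans (Finset.card_le_card (Finset.inter_subset_left)) (hdeg2 x)
        exact_mod_cast hle
    have hSgbound : ∑ x ∈ Sg, ((G2.neighborFinset x ∩ U1).card : ℝ)
        ≤ (Sg.card : ℝ) * (ε * Δ2) := by
      have h := Finset.sum_le_card_nsmul Sg
        (fun x => ((G2.neighborFinset x ∩ U1).card : ℝ)) (ε * Δ2) ?_
      · simpa [nsmul_eq_mul] using h
      · intro x hx
        show ((G2.neighborFinset x ∩ U1).card : ℝ) ≤ ε * Δ2
        rcases Finset.mem_filter.mp hx with ⟨hxS, hxne⟩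
        obtain ⟨y, hy⟩ := Finset.nonempty_iff_ne_empty.mpr hxne
        rcases Finset.mem_inter.mp hy with ⟨hyN, hyS⟩
        have hxy : G2.Adj x y := (hN2 x y).mp hyN
        have hcd := hadjcodeg x y hxy
        have hdisj : Disjoint (G2.neighborFinset x ∩ U1)
            (G2.neighborFinset x ∩ G2.neighborFinset y) := by
          rw [Finset.disjoint_left]
          intro w hw hw'
          rcases Finset.mem_inter.mp hw with ⟨hwx, hwU1⟩
          rcases Finset.mem_inter.mp hw' with ⟨_, hwy⟩
          have hcard1 := (Finset.mem_filter.mp hwU1).2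
          have hxmem : x ∈ G2.neighborFinset w ∩ S := Finset.mem_inter.mpr
            ⟨(hN2 w x).mpr ((hN2 x w).mp hwx).symm, hxS⟩
          have hymem : y ∈ G2.neighborFinset w ∩ S := Finset.mem_inter.mpr
            ⟨(hN2 w y).mpr ((hN2 y w).mp hwy).symm, hyS⟩
          have hpair : ({x, y} : Finset V) ⊆ G2.neighborFinset w ∩ S := by
            intro z hz
            rcases Finset.mem_insert.mp hz with h | h
            · exact h ▸ hxmem
            · exact (Finset.mem_singleton.mp h) ▸ hymem
          have h2 : 2 ≤ (G2.neighborFinset w ∩ S).card := by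
            have hc := Finset.card_le_card hpair
            rwa [Finset.card_pair hxy.ne] at hc
          omega
        have hunion : (G2.neighborFinset x ∩ U1).card
            + (G2.neighborFinset x ∩ G2.neighborFinset y).card
            ≤ (G2.neighborFinset x).card := by
          rw [← Finset.card_union_of_disjoint hdisj]
          exact Finset.card_le_card (Finset.union_subset Finset.inter_subset_left
            Finset.inter_subset_left)
        have hx2 : ((G2.neighborFinset x).card : ℝ) ≤ Δ2 := by exact_mod_cast hdeg2 x
        have hunion' : ((G2.neighborFinset x ∩ U1).card : ℝ)
            + ((G2.neighborFinset x ∩ G2.neighborFinset y).card : ℝ)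
            ≤ ((G2.neighborFinset x).card : ℝ) := by exact_mod_cast hunion
        linarith
    linarith
  -- assemble everything
  have hA : (U.card : ℝ) * 2 ≤ (U1.card : ℝ) + (S.card : ℝ) * Δ2 := by
    have h : U.card * 2 ≤ U1.card + S.card * Δ2 := by omega
    exact_mod_cast h
  have hD : (S.card : ℝ) ≤ (Δ1 : ℝ) := by exact_mod_cast hdegS
  have hE : (I'.card : ℝ) ≤ (Δ2 : ℝ) * ((t : ℝ) - 1) + 1 := by
    have hc : (I'.card : ℝ) ≤ ((Δ2 * (t - 1) + 1 : ℕ) : ℝ) := by exact_mod_cast hI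
    rwa [Nat.cast_add, Nat.cast_mul, Nat.cast_sub h1t, Nat.cast_one] at hc
  have hSgeq : (Sg.card : ℝ) = (S.card : ℝ) - (I'.card : ℝ) := by
    have hc : ((I'.card + Sg.card : ℕ) : ℝ) = (S.card : ℝ) := by exact_mod_cast hIS
    push_cast at hc
    linarith
  rw [hSgeq] at hU1bound
  have hq2 : ((S.card : ℝ) - (I'.card : ℝ)) * (ε * Δ2) + (I'.card : ℝ) * Δ2
      = (S.card : ℝ) * (ε * Δ2) + (I'.card : ℝ) * ((1 - ε) * Δ2) := by ring
  have hq3 : (S.card : ℝ) * (ε * Δ2) ≤ (Δ1 : ℝ) * (ε * Δ2) :=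
    mul_le_mul_of_nonneg_right hD (by positivity)
  have hq4 : (I'.card : ℝ) * ((1 - ε) * Δ2)
      ≤ ((Δ2 : ℝ) * ((t : ℝ) - 1) + 1) * ((1 - ε) * Δ2) :=
    mul_le_mul_of_nonneg_right hE
      (mul_nonneg (by linarith) (Nat.cast_nonneg _))
  have hq5 : (S.card : ℝ) * (Δ2 : ℝ) ≤ (Δ1 : ℝ) * Δ2 :=
    mul_le_mul_of_nonneg_right hD (Nat.cast_nonneg _)
  have hΔ2nn : (0 : ℝ) ≤ (Δ2 : ℝ) := Nat.cast_nonneg _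
  nlinarith [hA, hU1bound, hq2, hq3, hq4, hq5, hΔ2nn]
end
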